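/- arXiv:1404.0021 — 11 statements merged into one kernel-verified Lean document; each statement's English description precedes it below -/
import Mathlib

section
/- Let P be a finite poset and F a family of posets. If S is an induced subposet of the lexicographic power P^k containing no member of F as an induced subposet, then |S| ≤ (ex*(P,F))^k, where ex*(P,F) is the maximum size of an F-free induced subposet of P. -/
/-- The lexicographic `k`-th power of a poset `P`: `k`-tuples ordered lexicographically. -/
abbrev LexPow (P : Type*) (k : ℕ) := Lex (Fin k → P)

/-- `exStar P F` : the maximum size of an induced subposet of `P` containing no member of
the family `F` as an induced subposet. -/
noncomputable def exStar (α : Type*) [PartialOrder α] {ι : Type*} (F : ι → Type*)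
    [∀ i, PartialOrder (F i)] : ℕ :=
  sSup {n | ∃ S : Finset α,
    (∀ i, ¬ Nonempty (F i ↪o {x // x ∈ S})) ∧ S.card = n}

section Helpers

variable {P : Type*} [PartialOrder P] {k : ℕ}

private def lhd (f : LexPow P (k + 1)) : P := ofLex f 0

private def ltl (f : LexPow P (k + 1)) : LexPow P k := toLex (fun i => ofLex f i.succ)

private def lcons (p : P) (g : LexPow P k) : LexPow P (k + 1) := toLex (Fin.cons p (ofLex g))

private lemma lhd_lcons (p : P) (g : LexPow P k) : lhd (lcons p g) = p := rfl

private lemma ltl_lcons (p : P) (g : LexPow P k) : ltl (lcons p g) = g := by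
  unfold ltl lcons
  rw [ofLex_toLex]
  conv_rhs => rw [← toLex_ofLex g]
  congr 1

private lemma lcons_eta (f : LexPow P (k + 1)) : lcons (lhd f) (ltl f) = f := by
  show toLex (Fin.cons (ofLex f 0) (fun i => ofLex f i.succ)) = f
  have : Fin.cons (ofLex f 0) (fun i => ofLex f i.succ) = ofLex f := Fin.cons_self_tail (ofLex f)
  rw [this]
  rfl

private lemma lex_lt_iff {f g : LexPow P (k + 1)} :
    f < g ↔ lhd f < lhd g ∨ (lhd f = lhd g ∧ ltl f < ltl g) := by
  constructor
  · rintro ⟨i, hji, hi⟩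
    rcases Fin.eq_zero_or_eq_succ i with rfl | ⟨j, rfl⟩
    · exact Or.inl hi
    · refine Or.inr ⟨hji 0 (Fin.succ_pos j), ⟨j, fun j' hj' => ?_, hi⟩⟩
      exact hji j'.succ (Fin.succ_lt_succ_iff.mpr hj')
  · rintro (h | ⟨h0, j, hj, hlt⟩)
    · exact ⟨0, fun j hj => absurd hj (Fin.not_lt_zero j), h⟩
    · refine ⟨j.succ, fun j' hj' => ?_, hlt⟩
      rcases Fin.eq_zero_or_eq_succ j' with rfl | ⟨m, rfl⟩
      · exact h0
      · exact hj m (Fin.succ_lt_succ_iff.mp hj')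

private lemma lhd_mono {f g : LexPow P (k + 1)} (h : f ≤ g) : lhd f ≤ lhd g := by
  rcases h.lt_or_eq with h | rfl
  · rcases lex_lt_iff.mp h with h' | ⟨h', _⟩
    · exact h'.le
    · exact h'.le
  · exact le_rfl

private lemma lhd_strict {f g : LexPow P (k + 1)} (h : lhd f < lhd g) : f < g :=
  lex_lt_iff.mpr (Or.inl h)

private lemma lex_le_iff_of_hd_eq {f g : LexPow P (k + 1)} (h0 : lhd f = lhd g) :
    f ≤ g ↔ ltl f ≤ ltl g := by
  constructor
  · intro h
    rcases h.lt_or_eq with h | rfl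
    · rcases lex_lt_iff.mp h with h' | ⟨_, h'⟩
      · rw [h0] at h'; exact absurd h' (lt_irrefl _)
      · exact h'.le
    · exact le_rfl
  · intro h
    rcases h.lt_or_eq with h | h
    · exact (lex_lt_iff.mpr (Or.inr ⟨h0, h⟩)).le
    · have : f = g := by rw [← lcons_eta f, ← lcons_eta g, h0, h]
      exact this.le

end Helpers

private lemma lex_aux {P : Type*} [PartialOrder P] [Fintype P] {ι : Type*}
    (F : ι → Type*) [∀ i, PartialOrder (F i)] :
    ∀ k (S : Finset (LexPow P k)),
      (∀ i, ¬ Nonempty (F i ↪o {x // x ∈ S})) → S.card ≤ (exStar P F) ^ k := by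
  intro k
  induction k with
  | zero =>
    intro S _
    rw [pow_zero]
    refine Finset.card_le_one.2 fun a _ b _ => ?_
    have : ofLex a = ofLex b := funext fun i => i.elim0
    exact ofLex_inj.mp this
  | succ k ih =>
    intro S hS
    classical
    set T : Finset P := S.image lhd with hT
    -- T is F-free
    have hTfree : ∀ i, ¬ Nonempty (F i ↪o {x // x ∈ T}) := by
      intro i ⟨emb⟩
      apply hS i
      have hchoice : ∀ t : {x // x ∈ T}, ∃ f, f ∈ S ∧ lhd f = t.val := by
        intro t
        obtain ⟨f, hf, hf2⟩ := Finset.mem_image.mp t.2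
        exact ⟨f, hf, hf2⟩
      choose g hgS hghd using hchoice
      refine ⟨OrderEmbedding.ofMapLEIff (fun a => ⟨g (emb a), hgS _⟩) fun a b => ?_⟩
      rw [Subtype.mk_le_mk]
      constructor
      · intro h
        have : (emb a).val ≤ (emb b).val := by
          rw [← hghd (emb a), ← hghd (emb b)]
          exact lhd_mono h
        exact emb.le_iff_le.mp (Subtype.coe_le_coe.mp this)
      · intro h
        rcases (emb.monotone h).lt_or_eq with h' | h'
        · have : lhd (g (emb a)) < lhd (g (emb b)) := by
            rw [hghd (emb a), hghd (emb b)]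
            exact Subtype.coe_lt_coe.mpr h'
          exact (lhd_strict this).le
        · rw [h']
    have hTcard : T.card ≤ exStar P F := by
      apply le_csSup
      · refine ⟨Fintype.card P, fun n hn => ?_⟩
        obtain ⟨S', _, rfl⟩ := hn
        exact Finset.card_le_univ S'
      · exact ⟨T, hTfree, rfl⟩
    -- fibers
    have key : ∀ p : P, (S.filter (fun f => lhd f = p)).card ≤ (exStar P F) ^ k := by
      intro p
      set Sp : Finset (LexPow P (k + 1)) := S.filter (fun f => lhd f = p) with hSp
      set Fp : Finset (LexPow P k) := Sp.image ltl with hFp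
      have hinj : Set.InjOn ltl (Sp : Set (LexPow P (k + 1))) := by
        intro f hf f' hf' h
        have hf1 : lhd f = p := (Finset.mem_filter.mp hf).2
        have hf2 : lhd f' = p := (Finset.mem_filter.mp hf').2
        rw [← lcons_eta f, ← lcons_eta f', hf1, hf2, h]
      have hcard : Sp.card = Fp.card := (Finset.card_image_of_injOn hinj).symm
      have hFpfree : ∀ i, ¬ Nonempty (F i ↪o {x // x ∈ Fp}) := by
        intro i ⟨emb⟩
        apply hS i
        have hmem : ∀ a : F i, lcons p ((emb a).val) ∈ S := by
          intro a
          obtain ⟨f, hf, hf2⟩ := Finset.mem_image.mp (emb a).2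
          have hf1 : lhd f = p := (Finset.mem_filter.mp hf).2
          have : f = lcons p ((emb a).val) := by
            rw [← lcons_eta f, hf1, hf2]
          rw [← this]
          exact (Finset.mem_filter.mp hf).1
        refine ⟨OrderEmbedding.ofMapLEIff (fun a => ⟨lcons p ((emb a).val), hmem a⟩)
          fun a b => ?_⟩
        rw [Subtype.mk_le_mk,
          lex_le_iff_of_hd_eq (by rw [lhd_lcons, lhd_lcons]),
          ltl_lcons, ltl_lcons]
        exact ⟨fun h => emb.le_iff_le.mp (Subtype.coe_le_coe.mp h),
          fun h => Subtype.coe_le_coe.mpr (emb.monotone h)⟩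
      calc Sp.card = Fp.card := hcard
        _ ≤ (exStar P F) ^ k := ih Fp hFpfree
    calc S.card = ∑ p ∈ T, (S.filter (fun f => lhd f = p)).card :=
          Finset.card_eq_sum_card_image lhd S
      _ ≤ ∑ _p ∈ T, (exStar P F) ^ k := Finset.sum_le_sum fun p _ => key p
      _ = T.card * (exStar P F) ^ k := by rw [Finset.sum_const, smul_eq_mul]
      _ ≤ (exStar P F) * (exStar P F) ^ k := Nat.mul_le_mul_right _ hTcard
      _ = (exStar P F) ^ (k + 1) := (pow_succ' _ _).symm

/-- If `S` is an `F`-free induced subposet of the lexicographic power `P^k`,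
then `|S| ≤ (ex*(P,F))^k`. -/
theorem lex_power_free_bound (P : Type*) [PartialOrder P] [Fintype P] {ι : Type*}
    (F : ι → Type*) [∀ i, PartialOrder (F i)] (k : ℕ) (S : Finset (LexPow P k))
    (hS : ∀ i, ¬ Nonempty (F i ↪o {x // x ∈ S})) :
    S.card ≤ (exStar P F) ^ k :=
  lex_aux F k S hS
end

section
/- Let P be a finite poset with |P| = m, F a family of posets, and k a positive integer. Then ex*(P^k, F) ≤ n^{log_m(ex*(P,F))} where n = m^k = |P^k|. -/
section Helpers

variable {P : Type*} [PartialOrder P]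

theorem lexpow_lt_iff {n : ℕ} {f g : Fin n → P} :
    toLex f < toLex g ↔ ∃ i, (∀ j, j < i → f j = g j) ∧ f i < g i := Iff.rfl

theorem lexpow_lt_of_head_lt {k : ℕ} {f g : Fin (k + 1) → P} (h : f 0 < g 0) :
    toLex f < toLex g :=
  ⟨0, fun j hj => absurd hj (Fin.not_lt_zero j), h⟩

theorem head_le_of_lexpow_lt {k : ℕ} {f g : Fin (k + 1) → P} (h : toLex f < toLex g) :
    f 0 ≤ g 0 := by
  obtain ⟨i, hj, hi⟩ := h
  rcases eq_or_ne i 0 with rfl | hne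
  · exact le_of_lt hi
  · exact le_of_eq (hj 0 (Fin.pos_iff_ne_zero.mpr hne))

theorem lexpow_cons_lt_cons_iff {k : ℕ} {p : P} {f g : Fin k → P} :
    toLex (Fin.cons p f : Fin (k + 1) → P) < toLex (Fin.cons p g) ↔ toLex f < toLex g := by
  constructor
  · rintro ⟨i, hj, hi⟩
    induction i using Fin.cases with
    | zero => simp at hi
    | succ i' =>
      refine ⟨i', fun j hj' => ?_, by simpa using hi⟩
      have := hj j.succ (by simpa [Fin.succ_lt_succ_iff] using hj')
      simpa using this
  · rintro ⟨i, hj, hi⟩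
    refine ⟨i.succ, fun j hj' => ?_, by simpa using hi⟩
    induction j using Fin.cases with
    | zero => simp
    | succ j' =>
      have := hj j' (by simpa [Fin.succ_lt_succ_iff] using hj')
      simpa using this

theorem lexpow_cons_le_cons_iff {k : ℕ} {p : P} {f g : Fin k → P} :
    toLex (Fin.cons p f : Fin (k + 1) → P) ≤ toLex (Fin.cons p g) ↔ toLex f ≤ toLex g := by
  rw [le_iff_lt_or_eq, le_iff_lt_or_eq]
  refine (or_congr_left lexpow_cons_lt_cons_iff).trans ?_
  constructor
  · rintro (h | h)
    · exact Or.inl h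
    · refine Or.inr ?_
      have h' : (Fin.cons p f : Fin (k + 1) → P) = Fin.cons p g := toLex_inj.mp h
      have h'' : f = g := Fin.cons_right_injective (α := fun _ : Fin (k + 1) => P) p h'
      exact congrArg toLex h''
  · rintro (h | h)
    · exact Or.inl h
    · refine Or.inr ?_
      have h' : f = g := toLex_inj.mp h
      rw [h']

variable {ι : Type*} (F : ι → Type*) [∀ i, PartialOrder (F i)]

theorem card_le_exStar [Fintype P] {S : Finset P}
    (hS : ∀ i, ¬ Nonempty (F i ↪o {x // x ∈ S})) : S.card ≤ exStar P F := by
  apply le_csSup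
  · refine ⟨Fintype.card P, ?_⟩
    rintro n ⟨T, -, rfl⟩
    exact Finset.card_le_univ T
  · exact ⟨S, hS, rfl⟩

theorem exStar_le {α : Type*} [PartialOrder α] {n : ℕ}
    (h : ∀ S : Finset α, (∀ i, ¬ Nonempty (F i ↪o {x // x ∈ S})) → S.card ≤ n) :
    exStar α F ≤ n := by
  apply csSup_le'
  rintro m ⟨S, hS, rfl⟩
  exact h S hS

/-- The key combinatorial lemma: any `F`-free induced subposet of `P^k` has size at most
`(exStar P F) ^ k`. -/
theorem lexpow_free_card_le [Fintype P] :
    ∀ (k : ℕ) (S : Finset (Lex (Fin k → P))),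
      (∀ i, ¬ Nonempty (F i ↪o {x // x ∈ S})) → S.card ≤ (exStar P F) ^ k := by
  intro k
  induction k with
  | zero =>
    intro S _
    have hsub : Subsingleton (Lex (Fin 0 → P)) :=
      ⟨fun a b => funext fun i => Fin.elim0 i⟩
    simpa using Finset.card_le_one.mpr fun a _ b _ => hsub.allEq a b
  | succ k ih =>
    intro S hS
    classical
    set x := exStar P F with hx
    -- the head map and the finset of heads
    set hd : Lex (Fin (k + 1) → P) → P := fun f => ofLex f 0 with hhd
    set T : Finset P := S.image hd with hT
    -- T is F-free: pick representatives
    have hrep : ∀ q ∈ T, ∃ f, f ∈ S ∧ hd f = q := by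
      intro q hq
      simpa [hT, Finset.mem_image] using hq
    have hTfree : ∀ i, ¬ Nonempty (F i ↪o {x // x ∈ T}) := by
      intro i ⟨e⟩
      apply hS i
      refine ⟨e.trans (OrderEmbedding.ofMapLEIff
        (fun q => (⟨(hrep q.1 q.2).choose, (hrep q.1 q.2).choose_spec.1⟩ :
          {a // a ∈ S})) ?_)⟩
      intro a b
      have ha := (hrep a.1 a.2).choose_spec.2
      have hb := (hrep b.1 b.2).choose_spec.2
      constructor
      · intro h
        rcases lt_or_eq_of_le h with h | h
        · have hlt : toLex (ofLex (hrep a.1 a.2).choose) < toLex (ofLex (hrep b.1 b.2).choose) :=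
            h
          have h2 : hd (hrep a.1 a.2).choose ≤ hd (hrep b.1 b.2).choose :=
            head_le_of_lexpow_lt hlt
          rw [ha, hb] at h2
          exact h2
        · have : (hrep a.1 a.2).choose = (hrep b.1 b.2).choose := by
            simpa [Subtype.ext_iff] using h
          have h2 : hd (hrep a.1 a.2).choose = hd (hrep b.1 b.2).choose := by rw [this]
          rw [ha, hb] at h2
          exact le_of_eq (Subtype.ext h2)
      · intro h
        rcases lt_or_eq_of_le h with h | h
        · have hlt : hd (hrep a.1 a.2).choose < hd (hrep b.1 b.2).choose := by
            rw [ha, hb]; exact h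
          have hlt2 : toLex (ofLex (hrep a.1 a.2).choose) < toLex (ofLex (hrep b.1 b.2).choose) :=
            lexpow_lt_of_head_lt hlt
          exact le_of_lt hlt2
        · have hab : a = b := h
          subst hab
          exact le_rfl
    have hTcard : T.card ≤ x := card_le_exStar F hTfree
    -- bound each fiber
    have hfiber : ∀ p ∈ T, (S.filter fun f => hd f = p).card ≤ x ^ k := by
      intro p _
      set Sp : Finset (Lex (Fin (k + 1) → P)) := S.filter fun f => hd f = p with hSp
      set tl : Lex (Fin (k + 1) → P) → Lex (Fin k → P) :=
        fun f => toLex (Fin.tail (ofLex f)) with htl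
      set S' : Finset (Lex (Fin k → P)) := Sp.image tl with hS'
      set cns : Lex (Fin k → P) → Lex (Fin (k + 1) → P) :=
        fun t => toLex (Fin.cons p (ofLex t)) with hcns
      have hcns_tl : ∀ f ∈ Sp, cns (tl f) = f := by
        intro f hf
        have hfp : hd f = p := (Finset.mem_filter.mp hf).2
        show toLex (Fin.cons p (Fin.tail (ofLex f))) = f
        rw [← hfp]
        exact congrArg toLex (Fin.cons_self_tail (ofLex f))
      have hcard : S'.card = Sp.card := by
        rw [hS']
        apply Finset.card_image_of_injOn
        intro f hf g hg h
        have := congrArg cns h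
        rwa [hcns_tl f hf, hcns_tl g hg] at this
      have hmem : ∀ t ∈ S', cns t ∈ S := by
        intro t ht
        obtain ⟨f, hf, rfl⟩ := Finset.mem_image.mp ht
        rw [hcns_tl f hf]
        exact (Finset.mem_filter.mp hf).1
      have hle_iff : ∀ a b : Lex (Fin k → P), cns a ≤ cns b ↔ a ≤ b := by
        intro a b
        have := lexpow_cons_le_cons_iff (p := p) (f := ofLex a) (g := ofLex b)
        simpa using this
      have hS'free : ∀ i, ¬ Nonempty (F i ↪o {a // a ∈ S'}) := by
        intro i ⟨e⟩
        apply hS i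
        refine ⟨e.trans (OrderEmbedding.ofMapLEIff
          (fun t => (⟨cns t.1, hmem t.1 t.2⟩ : {a // a ∈ S})) ?_)⟩
        intro a b
        exact hle_iff a.1 b.1
      have := ih S' hS'free
      rw [hcard] at this
      exact this
    calc S.card = ∑ p ∈ T, (S.filter fun f => hd f = p).card :=
          Finset.card_eq_sum_card_image hd S
      _ ≤ ∑ _p ∈ T, x ^ k := Finset.sum_le_sum hfiber
      _ = T.card * x ^ k := by rw [Finset.sum_const, smul_eq_mul]
      _ ≤ x * x ^ k := Nat.mul_le_mul_right _ hTcard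
      _ = x ^ (k + 1) := (pow_succ' x k).symm

end Helpers

/-- Theorem 2.1: `ex*(P^k, F) ≤ n ^ (log_m (ex*(P,F)))` where `m = |P|` and `n = m^k`. -/
theorem lex_power_exStar_bound (P : Type*) [PartialOrder P] [Fintype P] {ι : Type*}
    (F : ι → Type*) [∀ i, PartialOrder (F i)] (k : ℕ) (hk : 0 < k) :
    (exStar (LexPow P k) F : ℝ) ≤
      ((Fintype.card P ^ k : ℕ) : ℝ) ^ Real.logb (Fintype.card P) (exStar P F) := by
  classical
  set m := Fintype.card P with hm
  set x := exStar P F with hx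
  set X := exStar (LexPow P k) F with hX
  have hXx : X ≤ x ^ k := exStar_le F (lexpow_free_card_le F k)
  haveI : Fintype (LexPow P k) := inferInstanceAs (Fintype (Fin k → P))
  have hcardLex : Fintype.card (LexPow P k) = m ^ k := by
    rw [hm]
    calc Fintype.card (LexPow P k) = Fintype.card (Fin k → P) := Fintype.card_congr ofLex
      _ = Fintype.card P ^ k := by simp [Fintype.card_fun]
  have hXcard : X ≤ m ^ k := by
    rw [← hcardLex]
    exact exStar_le F fun S _ => Finset.card_le_univ S
  rcases Nat.eq_zero_or_pos X with hX0 | hX1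
  · rw [hX0]
    push_cast
    exact Real.rpow_nonneg (by positivity) _
  · -- X ≥ 1
    have hx1 : 1 ≤ x := by
      rcases Nat.eq_zero_or_pos x with h0 | h
      · rw [h0, zero_pow (Nat.pos_iff_ne_zero.mp hk)] at hXx
        omega
      · exact h
    rcases le_or_gt m 1 with hm1 | hm2
    · -- m ≤ 1 : then m^k ≤ 1 so X = 1 and m^k = 1
      have hmk : m ^ k ≤ 1 := by
        calc m ^ k ≤ 1 ^ k := Nat.pow_le_pow_left hm1 k
          _ = 1 := one_pow k
      have hmk1 : m ^ k = 1 := le_antisymm hmk (le_trans hX1 hXcard)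
      have hXval : X = 1 := le_antisymm (hmk1 ▸ hXcard) hX1
      rw [hXval, hmk1]
      simp [Real.one_rpow]
    · -- m ≥ 2
      have hm0 : (0:ℝ) < (m:ℝ) := by positivity
      have hmne1 : (m:ℝ) ≠ 1 := by
        exact_mod_cast (by omega : (m:ℕ) ≠ 1)
      have hx0 : (0:ℝ) < (x:ℝ) := by exact_mod_cast Nat.lt_of_lt_of_le Nat.zero_lt_one hx1
      have key : ((m ^ k : ℕ) : ℝ) ^ Real.logb (m:ℝ) (x:ℝ) = (x:ℝ) ^ (k:ℕ) := by
        have h1 : ((m ^ k : ℕ) : ℝ) = (m:ℝ) ^ ((k:ℕ):ℝ) := by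
          push_cast
          rw [Real.rpow_natCast]
        rw [h1, ← Real.rpow_mul (le_of_lt hm0), mul_comm, Real.rpow_mul (le_of_lt hm0),
          Real.rpow_logb hm0 hmne1 hx0, Real.rpow_natCast]
      rw [key]
      exact_mod_cast hXx
end

section
/- In the lexicographic power P^k, for any fixed initial segment α of length i and any induced subposet S of P^k, the set Q(α) = {p ∈ P : (α,p) is an initial segment of some s ∈ S} embeds into S as an induced subposet of S. -/
/-- For an initial segment `α` of length `i < k` and an induced subposet `S` of `P^k`,
the set `Q(α)` of possible `(i+1)`-st coordinates of elements of `S` with initial segment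
`α` embeds into `S` as an induced subposet. -/
theorem Q_embeds (P : Type*) [PartialOrder P] (k i : ℕ) (hik : i < k) (α : Fin i → P)
    (S : Set (LexPow P k)) :
    Nonempty ({p : P // ∃ s ∈ S,
        (∀ j : Fin i, ofLex s (Fin.castLE hik.le j) = α j) ∧ ofLex s ⟨i, hik⟩ = p} ↪o ↥S) := by
  classical
  set Q := {p : P // ∃ s ∈ S,
      (∀ j : Fin i, ofLex s (Fin.castLE hik.le j) = α j) ∧ ofLex s ⟨i, hik⟩ = p}
  have hmem : ∀ p : Q, p.2.choose ∈ S := fun p => p.2.choose_spec.1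
  have hinit : ∀ (p : Q) (j : Fin k) (hj : (j : ℕ) < i),
      ofLex p.2.choose j = α ⟨j, hj⟩ := by
    intro p j hj
    have := p.2.choose_spec.2.1 ⟨j, hj⟩
    simpa [Fin.castLE] using this
  have hcoord : ∀ p : Q, ofLex p.2.choose ⟨i, hik⟩ = p.1 := fun p => p.2.choose_spec.2.2
  refine ⟨OrderEmbedding.ofMapLEIff (fun p => ⟨p.2.choose, hmem p⟩) ?_⟩
  intro p q
  constructor
  · intro h
    have h' : p.2.choose ≤ q.2.choose := h
    rcases h'.lt_or_eq with hlt | heq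
    · obtain ⟨j, hj1, hj2⟩ := hlt
      have hj2' : ofLex p.2.choose j < ofLex q.2.choose j := hj2
      rcases lt_trichotomy (j : ℕ) i with hji | hji | hji
      · rw [hinit p j hji, hinit q j hji] at hj2'
        exact absurd hj2' (lt_irrefl _)
      · have hj' : j = ⟨i, hik⟩ := Fin.ext hji
        subst hj'
        rw [hcoord p, hcoord q] at hj2'
        exact le_of_lt hj2'
      · have h0 : ofLex p.2.choose ⟨i, hik⟩ = ofLex q.2.choose ⟨i, hik⟩ :=
          hj1 ⟨i, hik⟩ (by exact hji)
        rw [hcoord p, hcoord q] at h0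
        exact le_of_eq (Subtype.ext h0)
    · have h0 : p.1 = q.1 := by rw [← hcoord p, ← hcoord q, heq]
      exact le_of_eq (Subtype.ext h0)
  · intro h
    rcases lt_or_eq_of_le (show p.1 ≤ q.1 from h) with hlt | heq
    · have hlex : p.2.choose < q.2.choose := by
        refine ⟨⟨i, hik⟩, ?_, ?_⟩
        · intro l hl
          have hli : (l : ℕ) < i := hl
          show ofLex p.2.choose l = ofLex q.2.choose l
          rw [hinit p l hli, hinit q l hli]
        · show ofLex p.2.choose ⟨i, hik⟩ < ofLex q.2.choose ⟨i, hik⟩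
          rw [hcoord p, hcoord q]; exact hlt
      exact le_of_lt hlex
    · have : p = q := Subtype.ext heq
      subst this
      exact le_refl _
end

section
/- The standard example S_m (for m ≥ 3) has order dimension exactly m. -/
/-- A poset has order dimension at most `d`: there are `d` linear extensions
whose intersection is the order relation. -/
def dimLE (α : Type*) [PartialOrder α] (d : ℕ) : Prop :=
  ∃ L : Fin d → LinearOrder α,
    (∀ i, ∀ x y : α, x ≤ y → (L i).le x y) ∧
    (∀ x y : α, (∀ i, (L i).le x y) → x ≤ y)

/-- The standard example `S_m`: `inl i = a_i`, `inr j = b_j`, with `a_i < b_j` iff `i ≠ j`,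
and no other strict relations. -/
def StdEx (m : ℕ) := Fin m ⊕ Fin m

instance (m : ℕ) : PartialOrder (StdEx m) where
  le x y := x = y ∨ ∃ i j, x = Sum.inl i ∧ y = Sum.inr j ∧ i ≠ j
  le_refl x := Or.inl rfl
  le_trans := by
    rintro x y z (rfl | ⟨i, j, rfl, rfl, hij⟩) (rfl | ⟨i', j', h1, rfl, hij'⟩)
    · exact Or.inl rfl
    · exact Or.inr ⟨i', j', h1, rfl, hij'⟩
    · exact Or.inr ⟨i, j, rfl, rfl, hij⟩
    · exact absurd h1 (by simp)
  le_antisymm := by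
    rintro x y (rfl | ⟨i, j, rfl, rfl, hij⟩) (h | ⟨i', j', h1, h2, hij'⟩)
    · rfl
    · rfl
    · exact absurd h (by simp)
    · exact absurd h1 (by simp)

instance (m : ℕ) : Fintype (StdEx m) := instFintypeSum _ _

/-- Rank function for the `i`-th linear extension of `StdEx m`:
`a_j (j≠i) < b_i < a_i < b_j (j≠i)`. -/
def rk (m : ℕ) (i : Fin m) : StdEx m → ℕ
  | .inl j => if j = i then m + 1 else j
  | .inr j => if j = i then m else m + 2 + j

lemma rk_inj (m : ℕ) (i : Fin m) : Function.Injective (rk m i) := by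
  rintro (a | a) (b | b) h <;> simp only [rk] at h <;> split_ifs at h with h1 h2 <;>
    first
      | (subst h1; subst h2; rfl)
      | exact congrArg _ (Fin.val_injective (by omega))
      | (exfalso; have := a.isLt; have := b.isLt; omega)

/-- The standard example `S_m` (for `m ≥ 3`) has order dimension exactly `m`. -/
theorem stdEx_dim (m : ℕ) (hm : 3 ≤ m) :
    dimLE (StdEx m) m ∧ ∀ d : ℕ, dimLE (StdEx m) d → m ≤ d := by
  constructor
  · refine ⟨fun i => LinearOrder.lift' (rk m i) (rk_inj m i), ?_, ?_⟩
    · rintro i x y (rfl | ⟨a, b, rfl, rfl, hab⟩)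
      · show rk m i x ≤ rk m i x
        exact le_rfl
      · show rk m i (Sum.inl a) ≤ rk m i (Sum.inr b)
        have ha := a.isLt; have hb := b.isLt
        simp only [rk]
        rcases eq_or_ne a i with h1 | h1 <;> rcases eq_or_ne b i with h2 | h2
        · exact absurd (h1.trans h2.symm) hab
        · simp only [if_pos h1, if_neg h2]; omega
        · simp only [if_neg h1, if_pos h2]; omega
        · simp only [if_neg h1, if_neg h2]; omega
    · rintro (a | a) (b | b) h
      · by_cases hab : a = b
        · exact Or.inl (by rw [hab])
        · exfalso
          have h1 := h a
          change rk m a (Sum.inl a) ≤ rk m a (Sum.inl b) at h1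
          simp [rk, Ne.symm hab] at h1
          have := b.isLt; omega
      · by_cases hab : a = b
        · subst hab
          exfalso
          have h1 := h a
          change rk m a (Sum.inl a) ≤ rk m a (Sum.inr a) at h1
          simp [rk] at h1
        · exact Or.inr ⟨a, b, rfl, rfl, hab⟩
      · -- `inr a ≤ inl b` is impossible: pick `k ≠ a` and look at `L k`.
        exfalso
        set k : Fin m := if a.val = 0 then ⟨1, by omega⟩ else ⟨0, by omega⟩ with hk
        have hka : k ≠ a := by
          rcases eq_or_ne a.val 0 with h0 | h0 <;>
            simp only [hk, h0, if_true, if_false, ite_true, ite_false, if_pos, if_neg] <;>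
            intro hc <;> apply_fun Fin.val at hc <;> simp_all
        have h1 := h k
        change rk m k (Sum.inr a) ≤ rk m k (Sum.inl b) at h1
        have := b.isLt
        rcases eq_or_ne b k with h2 | h2 <;>
          simp [rk, Ne.symm hka, h2] at h1 <;> omega
      · by_cases hab : a = b
        · exact Or.inl (by rw [hab])
        · exfalso
          have h1 := h b
          change rk m b (Sum.inr a) ≤ rk m b (Sum.inr b) at h1
          simp [rk, hab] at h1
          have := a.isLt; omega
  · rintro d ⟨L, hL1, hL2⟩
    have key : ∀ i : Fin m, ∃ k : Fin d, ¬ (L k).le (Sum.inl i) (Sum.inr i) := by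
      intro i
      by_contra hc
      push_neg at hc
      have := hL2 (Sum.inl i) (Sum.inr i) hc
      rcases this with h | ⟨a, b, ha, hb, hab⟩
      · exact absurd h (by simp)
      · cases ha; cases hb
        exact hab rfl
    choose f hf using key
    have hinj : Function.Injective f := by
      intro i j hij
      by_contra hne
      have hbj : (L (f i)).le (Sum.inr j) (Sum.inl j) := by
        rw [hij]; exact ((L (f j)).le_total _ _).resolve_left (hf j)
      have h1 : (L (f i)).le (Sum.inl i) (Sum.inr j) :=
        hL1 (f i) _ _ (Or.inr ⟨i, j, rfl, rfl, hne⟩)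
      have h2 : (L (f i)).le (Sum.inl j) (Sum.inr i) :=
        hL1 (f i) _ _ (Or.inr ⟨j, i, rfl, rfl, Ne.symm hne⟩)
      exact hf i ((L (f i)).le_trans _ _ _ ((L (f i)).le_trans _ _ _ h1 hbj) h2)
    simpa using Fintype.card_le_of_injective f hinj
end

section
/- The maximum size of an induced subposet of the standard example S_m (m ≥ 3) that has order dimension at most 2 is m + 2. -/
-- auxiliary

lemma StdEx.le_iff {m : ℕ} (x y : StdEx m) :
    x ≤ y ↔ (x = y ∨ ∃ i j, x = Sum.inl i ∧ y = Sum.inr j ∧ i ≠ j) := Iff.rfl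

def ofRank {α : Type*} (f : α → ℕ) (inj : Function.Injective f) : LinearOrder α where
  le x y := f x ≤ f y
  le_refl _ := Nat.le_refl _
  le_trans _ _ _ := Nat.le_trans
  le_antisymm _ _ h h' := inj (Nat.le_antisymm h h')
  le_total _ _ := Nat.le_total _ _
  toDecidableLE x y := inferInstanceAs (Decidable (f x ≤ f y))

example (α : Type) (f : α → ℕ) (inj : Function.Injective f) (x y : α)
    (h : (ofRank f inj).le x y) : f x ≤ f y := h

lemma stdex_upper (m : ℕ) (hm : 3 ≤ m) (S : Finset (StdEx m))
    (h : dimLE {x // x ∈ S} 2) : S.card ≤ m + 2 := by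
  letI : DecidableEq (StdEx m) := inferInstanceAs (DecidableEq (Fin m ⊕ Fin m))
  obtain ⟨L, hext, hint⟩ := h
  classical
  set A := Finset.univ.filter (fun i : Fin m => Sum.inl i ∈ S) with hA
  set B := Finset.univ.filter (fun i : Fin m => Sum.inr i ∈ S) with hB
  have hSA : S ⊆ A.image Sum.inl ∪ B.image Sum.inr := by
    intro x hx
    rcases x with i | i
    · exact Finset.mem_union_left _ (Finset.mem_image_of_mem _ (by simp [hA, hx]; exact hx))
    · exact Finset.mem_union_right _ (Finset.mem_image_of_mem _ (by simp [hB, hx]; exact hx))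
  have hcount : S.card ≤ m + (A ∩ B).card := by
    have h1 : S.card ≤ (A.image Sum.inl ∪ B.image Sum.inr).card := Finset.card_le_card hSA
    have h2 : (A.image Sum.inl ∪ B.image Sum.inr).card ≤
        (A.image Sum.inl).card + (B.image Sum.inr).card := Finset.card_union_le _ _
    have h3 : (A.image (Sum.inl : Fin m → StdEx m)).card ≤ A.card := Finset.card_image_le
    have h4 : (B.image (Sum.inr : Fin m → StdEx m)).card ≤ B.card := Finset.card_image_le
    have h5 : (A ∪ B).card + (A ∩ B).card = A.card + B.card :=
      Finset.card_union_add_card_inter A B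
    have h6 : (A ∪ B).card ≤ m := by
      simpa using Finset.card_le_card (Finset.subset_univ (A ∪ B))
    omega
  suffices hT : (A ∩ B).card ≤ 2 by omega
  by_contra hT3
  push_neg at hT3
  obtain ⟨i, hi⟩ := Finset.card_pos.mp (by omega : 0 < (A ∩ B).card)
  have hcard2 : 0 < ((A ∩ B).erase i).card := by
    rw [Finset.card_erase_of_mem hi]; omega
  obtain ⟨j, hj⟩ := Finset.card_pos.mp hcard2
  have hcard3 : 0 < (((A ∩ B).erase i).erase j).card := by
    rw [Finset.card_erase_of_mem hj, Finset.card_erase_of_mem hi]; omega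
  obtain ⟨k, hk⟩ := Finset.card_pos.mp hcard3
  rw [Finset.mem_erase] at hj
  rw [Finset.mem_erase, Finset.mem_erase] at hk
  obtain ⟨hji, hjm⟩ := hj
  obtain ⟨hkj, hki, hkm⟩ := hk
  have getmem : ∀ t : Fin m, t ∈ A ∩ B → Sum.inl t ∈ S ∧ Sum.inr t ∈ S := by
    intro t ht
    rw [Finset.mem_inter, hA, hB, Finset.mem_filter, Finset.mem_filter] at ht
    exact ⟨ht.1.2, ht.2.2⟩
  have choose : ∀ (t : Fin m) (hl : Sum.inl t ∈ S) (hr : Sum.inr t ∈ S),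
      ∃ e : Fin 2, ¬ (L e).le ⟨Sum.inl t, hl⟩ ⟨Sum.inr t, hr⟩ := by
    intro t hl hr
    by_contra hc
    push_neg at hc
    have := hint ⟨Sum.inl t, hl⟩ ⟨Sum.inr t, hr⟩ hc
    erw [Subtype.mk_le_mk, StdEx.le_iff] at this
    rcases this with h | ⟨a, b, h1, h2, hab⟩
    · exact absurd h (by simp)
    · erw [Sum.inl.injEq] at h1; erw [Sum.inr.injEq] at h2
      subst h1; subst h2; exact hab rfl
  have key2 : ∀ (e : Fin 2) (s t : Fin m), s ≠ t →
      ∀ (hs : Sum.inl s ∈ S) (hs' : Sum.inr s ∈ S) (ht : Sum.inl t ∈ S) (ht' : Sum.inr t ∈ S),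
      ¬ (L e).le ⟨Sum.inl s, hs⟩ ⟨Sum.inr s, hs'⟩ →
      ¬ (L e).le ⟨Sum.inl t, ht⟩ ⟨Sum.inr t, ht'⟩ → False := by
    intro e s t hst hs hs' ht ht' h1 h2
    have r1 : (L e).le ⟨Sum.inl s, hs⟩ ⟨Sum.inr t, ht'⟩ :=
      hext e _ _ (Subtype.mk_le_mk.mpr (Or.inr ⟨s, t, rfl, rfl, hst⟩))
    have r2 : (L e).le ⟨Sum.inl t, ht⟩ ⟨Sum.inr s, hs'⟩ :=
      hext e _ _ (Subtype.mk_le_mk.mpr (Or.inr ⟨t, s, rfl, rfl, hst.symm⟩))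
    have b1 : (L e).le ⟨Sum.inr s, hs'⟩ ⟨Sum.inl s, hs⟩ :=
      ((L e).le_total _ _).resolve_left h1
    have b2 : (L e).le ⟨Sum.inr t, ht'⟩ ⟨Sum.inl t, ht⟩ :=
      ((L e).le_total _ _).resolve_left h2
    have c1 : (L e).le ⟨Sum.inl s, hs⟩ ⟨Sum.inl t, ht⟩ := (L e).le_trans _ _ _ r1 b2
    have c2 : (L e).le ⟨Sum.inl t, ht⟩ ⟨Sum.inl s, hs⟩ := (L e).le_trans _ _ _ r2 b1
    have heq := (L e).le_antisymm _ _ c1 c2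
    erw [Subtype.mk_eq_mk, Sum.inl.injEq] at heq
    exact hst heq
  obtain ⟨hil, hir⟩ := getmem i hi
  obtain ⟨hjl, hjr⟩ := getmem j hjm
  obtain ⟨hkl, hkr⟩ := getmem k hkm
  obtain ⟨ei, hei⟩ := choose i hil hir
  obtain ⟨ej, hej⟩ := choose j hjl hjr
  obtain ⟨ek, hek⟩ := choose k hkl hkr
  have tri : ei = ej ∨ ei = ek ∨ ej = ek := by
    have h1 := ei.isLt; have h2 := ej.isLt; have h3 := ek.isLt
    rcases ei with ⟨a, _⟩; rcases ej with ⟨b, _⟩; rcases ek with ⟨c, _⟩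
    simp only [Fin.mk.injEq]
    omega
  rcases tri with h | h | h
  · subst h; exact key2 ei i j (fun hh => hji (by rw [hh])) hil hir hjl hjr hei hej
  · subst h; exact key2 ei i k (fun hh => hki (by rw [hh])) hil hir hkl hkr hei hek
  · subst h; exact key2 ej j k (fun hh => hkj (by rw [hh])) hjl hjr hkl hkr hej hek

def F1 (m : ℕ) : StdEx m → ℕ
  | Sum.inl i => if i.val = 0 then m + 1 else i.val
  | Sum.inr j => if j.val = 0 then m else m + 3

def F2 (m : ℕ) : StdEx m → ℕ
  | Sum.inl i => if i.val = 0 then 0 else 2 * (m - i.val)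
  | Sum.inr j => if j.val = 0 then 2 * m + 1 else 2 * m - 3

lemma stdex_lower (m : ℕ) (hm : 3 ≤ m) :
    ∃ S : Finset (StdEx m), dimLE {x // x ∈ S} 2 ∧ S.card = m + 2 := by
  haveI : DecidableEq (StdEx m) := inferInstanceAs (DecidableEq (Fin m ⊕ Fin m))
  set S : Finset (Fin m ⊕ Fin m) := (Finset.univ.map ⟨Sum.inl, Sum.inl_injective⟩) ∪
      {Sum.inr ⟨0, by omega⟩, Sum.inr ⟨1, by omega⟩} with hS
  have hl : ∀ i : Fin m, (Sum.inl i : StdEx m) ∈ S := by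
    intro i; simp only [hS, Finset.mem_union, Finset.mem_map]
    exact Or.inl ⟨i, Finset.mem_univ i, rfl⟩
  have hr : ∀ j : Fin m, (Sum.inr j : StdEx m) ∈ S → j.val = 0 ∨ j.val = 1 := by
    intro j hj
    rw [hS, Finset.mem_union] at hj
    rcases hj with hj | hj
    · simp at hj
    · rw [Finset.mem_insert, Finset.mem_singleton] at hj
      rcases hj with hj | hj
      · left; rw [Sum.inr.injEq] at hj; rw [hj]
      · right; rw [Sum.inr.injEq] at hj; rw [hj]
  have inj1 : Function.Injective (fun x : {z // z ∈ S} => F1 m x.val) := by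
    rintro ⟨x, hx⟩ ⟨y, hy⟩ h
    simp only at h
    rw [Subtype.mk_eq_mk]
    rcases x with i | i <;> rcases y with i' | i'
    · have h1 := i.isLt; have h2 := i'.isLt
      simp only [F1] at h
      congr 1; apply Fin.ext
      split_ifs at h <;> omega
    · have := hr i' hy
      have h1 := i.isLt
      simp only [F1] at h
      split_ifs at h <;> omega
    · have := hr i hx
      have h1 := i'.isLt
      simp only [F1] at h
      split_ifs at h <;> omega
    · have h1 := hr i hx; have h2 := hr i' hy
      simp only [F1] at h
      congr 1; apply Fin.ext
      split_ifs at h <;> omega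
  have inj2 : Function.Injective (fun x : {z // z ∈ S} => F2 m x.val) := by
    rintro ⟨x, hx⟩ ⟨y, hy⟩ h
    simp only at h
    rw [Subtype.mk_eq_mk]
    rcases x with i | i <;> rcases y with i' | i'
    · have h1 := i.isLt; have h2 := i'.isLt
      simp only [F2] at h
      congr 1; apply Fin.ext
      split_ifs at h <;> omega
    · have := hr i' hy
      have h1 := i.isLt
      simp only [F2] at h
      split_ifs at h <;> omega
    · have := hr i hx
      have h1 := i'.isLt
      simp only [F2] at h
      split_ifs at h <;> omega
    · have h1 := hr i hx; have h2 := hr i' hy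
      simp only [F2] at h
      congr 1; apply Fin.ext
      split_ifs at h <;> omega
  refine ⟨S, ⟨![ofRank _ inj1, ofRank _ inj2], ?_, ?_⟩, ?_⟩
  · -- extensions
    intro e x y hxy
    rcases x with ⟨x, hx⟩; rcases y with ⟨y, hy⟩
    rw [Subtype.mk_le_mk, StdEx.le_iff] at hxy
    rcases hxy with rfl | ⟨i, j, rfl, rfl, hij⟩
    · exact (![ofRank _ inj1, ofRank _ inj2] e).le_refl _
    · have hij' : i.val ≠ j.val := fun hh => hij (Fin.ext hh)
      have h1 := i.isLt
      have hj := hr j hy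
      fin_cases e
      · show F1 m (Sum.inl i) ≤ F1 m (Sum.inr j)
        simp only [F1]
        split_ifs <;> omega
      · show F2 m (Sum.inl i) ≤ F2 m (Sum.inr j)
        simp only [F2]
        split_ifs <;> omega
  · -- intersection
    intro x y h
    have h1 : F1 m x.val ≤ F1 m y.val := h 0
    have h2 : F2 m x.val ≤ F2 m y.val := h 1
    clear h
    rcases x with ⟨x, hx⟩; rcases y with ⟨y, hy⟩
    rw [Subtype.mk_le_mk, StdEx.le_iff]
    simp only at h1 h2
    rcases x with i | i <;> rcases y with i' | i'
    · left
      have ha := i.isLt; have hb := i'.isLt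
      simp only [F1, F2] at h1 h2
      congr 1; apply Fin.ext
      split_ifs at h1 h2 <;> omega
    · by_cases hii : i = i'
      · subst hii
        exfalso
        have := hr i hy
        have ha := i.isLt
        simp only [F1, F2] at h1 h2
        split_ifs at h1 h2 <;> omega
      · exact Or.inr ⟨i, i', rfl, rfl, hii⟩
    · exfalso
      have := hr i hx
      have ha := i'.isLt
      simp only [F1, F2] at h1 h2
      split_ifs at h1 h2 <;> omega
    · left
      have ha := hr i hx; have hb := hr i' hy
      simp only [F1, F2] at h1 h2
      congr 1; apply Fin.ext
      split_ifs at h1 h2 <;> omega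
  · -- cardinality
    show Finset.card (α := Fin m ⊕ Fin m) S = m + 2
    rw [hS, Finset.card_union_of_disjoint, Finset.card_map, Finset.card_univ,
      Fintype.card_fin, Finset.card_pair]
    · intro hh; rw [Sum.inr.injEq, Fin.mk.injEq] at hh; omega
    · rw [Finset.disjoint_left]
      rintro x hx hx'
      simp only [Finset.mem_map, Finset.mem_insert, Finset.mem_singleton] at hx hx'
      obtain ⟨a, _, rfl⟩ := hx
      rcases hx' with hh | hh <;> exact Sum.inl_ne_inr hh

/-- The maximum size of an induced subposet of `S_m` (`m ≥ 3`) of order dimension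
at most 2 is `m + 2`. -/
theorem stdEx_dim2_subposet (m : ℕ) (hm : 3 ≤ m) :
    IsGreatest {n | ∃ S : Finset (StdEx m), dimLE {x // x ∈ S} 2 ∧ S.card = n} (m + 2) := by
  constructor
  · obtain ⟨S, h1, h2⟩ := stdex_lower m hm
    exact ⟨S, h1, h2⟩
  · rintro n ⟨S, hd, rfl⟩
    exact stdex_upper m hm S hd
end

section
/- The maximum size of an induced subposet of the standard example S_m that has order dimension at most d (for 2 ≤ d < m) is m + d. -/
/-- Rank function realizing the `k`-th linear extension on the witness set. -/
def fkAux (m k : ℕ) : StdEx m → ℕ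
  | Sum.inl i =>
      if (i : ℕ) = k then m + 1
      else if k = 0 then (if (i : ℕ) = 1 then 0 else m - (i : ℕ))
      else if k = 1 then (if (i : ℕ) = 0 then 0 else (i : ℕ))
      else (i : ℕ)
  | Sum.inr j => if (j : ℕ) = k then m else m + 2 + (j : ℕ)

lemma fkAux_injective (m k : ℕ) : Function.Injective (fkAux m k) := by
  rintro (i | i) (j | j) h <;> simp only [fkAux] at h
  · have h1 := i.isLt; have h2 := j.isLt
    congr 1; apply Fin.ext; split_ifs at h <;> first | exact ‹False›.elim | omega
  · have h1 := i.isLt; have h2 := j.isLt; split_ifs at h <;> first | exact ‹False›.elim | omega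
  · have h1 := i.isLt; have h2 := j.isLt; split_ifs at h <;> first | exact ‹False›.elim | omega
  · have h1 := i.isLt; have h2 := j.isLt
    congr 1; apply Fin.ext; split_ifs at h <;> first | exact ‹False›.elim | omega

lemma fkAux_inl_lt (m k : ℕ) (i : Fin m) (h : (i : ℕ) ≠ k) :
    fkAux m k (Sum.inl i) < m := by
  have h1 := i.isLt; simp only [fkAux]; split_ifs <;> first | exact ‹False›.elim | omega

lemma fkAux_inl_le (m k : ℕ) (i : Fin m) : fkAux m k (Sum.inl i) ≤ m + 1 := by
  have h1 := i.isLt; simp only [fkAux]; split_ifs <;> first | exact ‹False›.elim | omega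

lemma fkAux_mono (m k : ℕ) {x y : StdEx m} (hxy : x ≤ y) :
    fkAux m k x ≤ fkAux m k y := by
  obtain rfl | ⟨i, j, rfl, rfl, hij⟩ := hxy
  · exact le_refl _
  · have h1 := i.isLt; have h2 := j.isLt
    have hij' : (i : ℕ) ≠ (j : ℕ) := fun h => hij (Fin.ext h)
    simp only [fkAux]; split_ifs <;> first | exact ‹False›.elim | omega

lemma exists_k_a (m d : ℕ) (hd2 : 2 ≤ d) (hdm : d < m) (i i' : Fin m)
    (hne : (i : ℕ) ≠ (i' : ℕ)) :
    ∃ k < d, fkAux m k (Sum.inl i') < fkAux m k (Sum.inl i) := by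
  have h1 := i.isLt; have h2 := i'.isLt
  by_cases hi : (i : ℕ) < d
  · exact ⟨i, hi, by simp only [fkAux]; split_ifs <;> first | exact ‹False›.elim | omega⟩
  · by_cases h0 : (i' : ℕ) = 0
    · exact ⟨1, by omega, by simp only [fkAux]; split_ifs <;> first | exact ‹False›.elim | omega⟩
    · by_cases h1' : (i' : ℕ) = 1
      · exact ⟨0, by omega, by simp only [fkAux]; split_ifs <;> first | exact ‹False›.elim | omega⟩
      · by_cases hlt : (i' : ℕ) < (i : ℕ)
        · exact ⟨1, by omega, by simp only [fkAux]; split_ifs <;> first | exact ‹False›.elim | omega⟩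
        · exact ⟨0, by omega, by simp only [fkAux]; split_ifs <;> first | exact ‹False›.elim | omega⟩

instance (m : ℕ) : DecidableEq (StdEx m) := inferInstanceAs (DecidableEq (Fin m ⊕ Fin m))

lemma fkAux_inl_self (m k : ℕ) (i : Fin m) (h : (i : ℕ) = k) :
    fkAux m k (Sum.inl i) = m + 1 := by simp [fkAux, h]

lemma fkAux_inr_self (m k : ℕ) (j : Fin m) (h : (j : ℕ) = k) :
    fkAux m k (Sum.inr j) = m := by simp [fkAux, h]

lemma fkAux_inr_ne (m k : ℕ) (j : Fin m) (h : (j : ℕ) ≠ k) :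
    fkAux m k (Sum.inr j) = m + 2 + (j : ℕ) := by simp [fkAux, h]

lemma stdEx_witness (m d : ℕ) (hd2 : 2 ≤ d) (hdm : d < m) :
    ∃ S : Finset (StdEx m), dimLE {x // x ∈ S} d ∧ S.card = m + d := by
  set S : Finset (StdEx m) :=
    (Finset.univ.image (Sum.inl : Fin m → StdEx m)) ∪
      ((Finset.univ.filter fun j : Fin m => (j : ℕ) < d).image
        (Sum.inr : Fin m → StdEx m)) with hSdef
  have hmemr : ∀ j : Fin m, (Sum.inr j : StdEx m) ∈ S ↔ (j : ℕ) < d := by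
    intro j
    refine (Finset.mem_union.trans (or_congr Finset.mem_image Finset.mem_image)).trans ⟨?_, fun h => Or.inr ⟨j, by simpa using h, rfl⟩⟩
    · rintro (⟨a, _, he⟩ | ⟨a, ha, he⟩)
      · cases he
      · obtain rfl := Sum.inr_injective he; simpa using ha
  refine ⟨S, ⟨fun k => LinearOrder.lift' (fun x : {y // y ∈ S} => fkAux m k x.val)
      (fun x y h => Subtype.ext (fkAux_injective m (k : ℕ) h)), ?_, ?_⟩, ?_⟩
  · intro k x y hxy
    show fkAux m (k : ℕ) x.val ≤ fkAux m (k : ℕ) y.val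
    exact fkAux_mono m (k : ℕ) (Subtype.coe_le_coe.mpr hxy)
  · rintro ⟨x, hx⟩ ⟨y, hy⟩ h
    have h' : ∀ k : ℕ, ∀ hk : k < d, fkAux m k x ≤ fkAux m k y := fun k hk => h ⟨k, hk⟩
    show x ≤ y
    rcases x with i | j <;> rcases y with i' | j'
    · -- inl i ≤ inl i'
      by_cases hii : i = i'
      · exact hii ▸ le_refl _
      · obtain ⟨k, hk, hlt⟩ := exists_k_a m d hd2 hdm i i'
          (fun hv => hii (Fin.ext hv))
        exact absurd (h' k hk) (not_le.mpr hlt)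
    · -- inl i ≤ inr j'
      by_cases hij : i = j'
      · subst hij
        have hjd : (i : ℕ) < d := (hmemr i).mp hy
        have h2 := h' (i : ℕ) hjd
        rw [fkAux_inl_self m (i : ℕ) i rfl, fkAux_inr_self m (i : ℕ) i rfl] at h2
        exact absurd h2 (by omega)
      · exact Or.inr ⟨i, j', rfl, rfl, hij⟩
    · -- inr j ≤ inl i' : impossible
      have hjd : (j : ℕ) < d := (hmemr j).mp hx
      by_cases hij : (i' : ℕ) = (j : ℕ)
      · set k : ℕ := if (j : ℕ) = 0 then 1 else 0 with hkdef
        have hkd : k < d := by rw [hkdef]; split_ifs <;> omega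
        have hkj : ¬ (j : ℕ) = k := by rw [hkdef]; split_ifs <;> omega
        have h2 := h' k hkd
        rw [fkAux_inr_ne m k j hkj] at h2
        have h3 := fkAux_inl_le m k i'
        exact absurd h2 (by omega)
      · have h2 := h' (j : ℕ) hjd
        rw [fkAux_inr_self m (j : ℕ) j rfl] at h2
        have h3 := fkAux_inl_lt m (j : ℕ) i' hij
        exact absurd h2 (by omega)
    · -- inr j ≤ inr j'
      by_cases hjj : j = j'
      · exact hjj ▸ le_refl _
      · have hjd : (j' : ℕ) < d := (hmemr j').mp hy
        have h2 := h' (j' : ℕ) hjd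
        rw [fkAux_inr_ne m (j' : ℕ) j (fun hv => hjj (Fin.ext hv)),
          fkAux_inr_self m (j' : ℕ) j' rfl] at h2
        exact absurd h2 (by omega)
  · -- cardinality
    have hdisj : Disjoint (Finset.univ.image (Sum.inl : Fin m → StdEx m))
        ((Finset.univ.filter fun j : Fin m => (j : ℕ) < d).image
          (Sum.inr : Fin m → StdEx m)) := by
      simp [Finset.disjoint_left]
    have hfilter : (Finset.univ.filter fun j : Fin m => (j : ℕ) < d) =
        Finset.univ.image (Fin.castLE hdm.le) := by
      ext j
      simp only [Finset.mem_filter, Finset.mem_univ, true_and, Finset.mem_image]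
      constructor
      · intro hj; exact ⟨⟨(j : ℕ), hj⟩, rfl⟩
      · rintro ⟨x, rfl⟩; exact x.isLt
    show ((Finset.univ.image (Sum.inl : Fin m → StdEx m)) ∪
      ((Finset.univ.filter fun j : Fin m => (j : ℕ) < d).image
        (Sum.inr : Fin m → StdEx m))).card = m + d
    rw [Finset.card_union_of_disjoint hdisj,
      Finset.card_image_of_injective _ Sum.inl_injective,
      Finset.card_image_of_injective _ Sum.inr_injective, hfilter,
      Finset.card_image_of_injective _ (Fin.castLE_injective _)]
    simp

lemma stdEx_upper (m d : ℕ) (hd2 : 2 ≤ d) (hdm : d < m) (S : Finset (StdEx m))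
    (hdim : dimLE {x // x ∈ S} d) : S.card ≤ m + d := by
  classical
  obtain ⟨L, hmono, hint⟩ := hdim
  set A : Finset (Fin m) := Finset.univ.filter (fun i => @id (StdEx m) (Sum.inl i) ∈ S) with hA
  set B : Finset (Fin m) := Finset.univ.filter (fun j => @id (StdEx m) (Sum.inr j) ∈ S) with hB
  have hS : S = A.image (fun i => @id (StdEx m) (Sum.inl i)) ∪ B.image (fun i => @id (StdEx m) (Sum.inr i)) := by
    ext x
    rw [Finset.mem_union, Finset.mem_image, Finset.mem_image]
    rcases x with i | j
    · constructor
      · intro h; exact Or.inl ⟨i, Finset.mem_filter.mpr ⟨Finset.mem_univ _, h⟩, rfl⟩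
      · rintro (⟨a, ha, he⟩ | ⟨a, ha, he⟩)
        · obtain rfl := Sum.inl_injective he; exact (Finset.mem_filter.mp ha).2
        · cases he
    · constructor
      · intro h; exact Or.inr ⟨j, Finset.mem_filter.mpr ⟨Finset.mem_univ _, h⟩, rfl⟩
      · rintro (⟨a, ha, he⟩ | ⟨a, ha, he⟩)
        · cases he
        · obtain rfl := Sum.inr_injective he; exact (Finset.mem_filter.mp ha).2
  have hcard : S.card = A.card + B.card := by
    rw [hS, Finset.card_union_of_disjoint ?_,
      Finset.card_image_of_injective (f := fun i : Fin m => @id (StdEx m) (Sum.inl i)) A (fun a b h => Sum.inl_injective h),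
      Finset.card_image_of_injective (f := fun i : Fin m => @id (StdEx m) (Sum.inr i)) B (fun a b h => Sum.inr_injective h)]
    rw [Finset.disjoint_left]
    intro x hx1 hx2
    obtain ⟨a, _, rfl⟩ := Finset.mem_image.mp hx1
    obtain ⟨b, _, he⟩ := Finset.mem_image.mp hx2
    cases he
  have key : ∀ i : Fin m, ∀ (h1 : Sum.inl i ∈ S) (h2 : Sum.inr i ∈ S),
      ∃ k : Fin d, ¬ (L k).le ⟨Sum.inl i, h1⟩ ⟨Sum.inr i, h2⟩ := by
    intro i h1 h2
    by_contra hall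
    push_neg at hall
    have hle := hint ⟨Sum.inl i, h1⟩ ⟨Sum.inr i, h2⟩ hall
    rcases hle with heq | ⟨a, b, ha, hb, hab⟩
    · simp at heq
    · exact hab ((Sum.inl_injective ha).symm.trans (Sum.inr_injective hb))
  have hAB : (A ∩ B).card ≤ d := by
    by_contra hcon
    push_neg at hcon
    have hmem : ∀ i ∈ A ∩ B, Sum.inl i ∈ S ∧ Sum.inr i ∈ S := by
      intro i hi
      rw [Finset.mem_inter, hA, hB, Finset.mem_filter, Finset.mem_filter] at hi
      exact ⟨hi.1.2, hi.2.2⟩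
    set g : Fin m → Fin d := fun i =>
      if h : Sum.inl i ∈ S ∧ Sum.inr i ∈ S then Classical.choose (key i h.1 h.2)
      else ⟨0, by omega⟩ with hg
    obtain ⟨i, hi, i', hi', hne, heq⟩ :=
      Finset.exists_ne_map_eq_of_card_lt_of_maps_to
        (show (Finset.univ : Finset (Fin d)).card < (A ∩ B).card by simpa using hcon)
        (fun a (_ : a ∈ A ∩ B) => Finset.mem_univ (g a))
    obtain ⟨hiA, hiB⟩ := hmem i hi
    obtain ⟨hiA', hiB'⟩ := hmem i' hi'
    have hgi : g i = Classical.choose (key i hiA hiB) := dif_pos ⟨hiA, hiB⟩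
    have hgi' : g i' = Classical.choose (key i' hiA' hiB') := dif_pos ⟨hiA', hiB'⟩
    have hs1 : ¬ (L (g i)).le ⟨Sum.inl i, hiA⟩ ⟨Sum.inr i, hiB⟩ := by
      rw [hgi]; exact Classical.choose_spec (key i hiA hiB)
    have hs2 : ¬ (L (g i)).le ⟨Sum.inl i', hiA'⟩ ⟨Sum.inr i', hiB'⟩ := by
      rw [heq, hgi']; exact Classical.choose_spec (key i' hiA' hiB')
    set k := g i with hk
    have t1 : (L k).le ⟨Sum.inr i, hiB⟩ ⟨Sum.inl i, hiA⟩ :=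
      ((L k).le_total _ _).resolve_left hs1
    have t2 : (L k).le ⟨Sum.inr i', hiB'⟩ ⟨Sum.inl i', hiA'⟩ :=
      ((L k).le_total _ _).resolve_left hs2
    have c1 : (L k).le ⟨Sum.inl i, hiA⟩ ⟨Sum.inr i', hiB'⟩ :=
      hmono k _ _ (Subtype.mk_le_mk.mpr (Or.inr ⟨i, i', rfl, rfl, hne⟩))
    have c2 : (L k).le ⟨Sum.inl i', hiA'⟩ ⟨Sum.inr i, hiB⟩ :=
      hmono k _ _ (Subtype.mk_le_mk.mpr (Or.inr ⟨i', i, rfl, rfl, Ne.symm hne⟩))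
    have hcyc : (L k).le ⟨Sum.inr i', hiB'⟩ ⟨Sum.inl i, hiA⟩ :=
      (L k).le_trans _ _ _ t2 ((L k).le_trans _ _ _ c2 t1)
    have := (L k).le_antisymm _ _ c1 hcyc
    exact (Sum.inl_ne_inr : (Sum.inl i : StdEx m) ≠ Sum.inr i') (congrArg Subtype.val this)
  calc S.card = A.card + B.card := hcard
    _ = (A ∪ B).card + (A ∩ B).card := (Finset.card_union_add_card_inter A B).symm
    _ ≤ m + d := by
        have h1 : (A ∪ B).card ≤ m := le_trans (Finset.card_le_univ _) (by simp)
        omega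

/-- The maximum size of an induced subposet of `S_m` of order dimension at most `d`
(for `2 ≤ d < m`) is `m + d`. -/
theorem stdEx_dimd_subposet (m d : ℕ) (hd2 : 2 ≤ d) (hdm : d < m) :
    IsGreatest {n | ∃ S : Finset (StdEx m), dimLE {x // x ∈ S} d ∧ S.card = n} (m + d) := by
  constructor
  · obtain ⟨S, h1, h2⟩ := stdEx_witness m d hd2 hdm
    exact ⟨S, h1, h2⟩
  · rintro n ⟨S, hdim, rfl⟩
    exact stdEx_upper m d hd2 hdm S hdim
end

section
/- For all sufficiently large n, every n-element poset need not contain a 2-dimensional induced subposet of size larger than n^{0.8295}; that is, ex*(n, D_3) ≤ n^{0.8295}. -/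
/-- The standard example `S₁₀` on 20 points: `i < j+10` iff `i ≠ j` (for `i,j < 10`). -/
def S10 : Type := Fin 20

namespace S10

def val (a : S10) : ℕ := Fin.val a

instance : DecidableEq S10 := instDecidableEqFin 20
instance : Fintype S10 := Fin.fintype 20

lemma ext {a b : S10} (h : val a = val b) : a = b := Fin.ext h

instance instPO : PartialOrder S10 where
  le a b := a = b ∨ (val a < 10 ∧ 10 ≤ val b ∧ val b ≠ val a + 10)
  le_refl a := Or.inl rfl
  le_trans a b c hab hbc := by
    rcases hab with rfl | ⟨h1, h2, h3⟩
    · exact hbc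
    · rcases hbc with rfl | ⟨h1', h2', h3'⟩
      · exact Or.inr ⟨h1, h2, h3⟩
      · omega
  le_antisymm a b hab hba := by
    rcases hab with rfl | ⟨h1, h2, h3⟩
    · rfl
    · rcases hba with rfl | ⟨h1', h2', h3'⟩
      · rfl
      · omega

lemma le_iff {a b : S10} :
    a ≤ b ↔ (a = b ∨ (val a < 10 ∧ 10 ≤ val b ∧ val b ≠ val a + 10)) := Iff.rfl

/-- total "shift by 10" map. -/
def shift (a : S10) : S10 := Fin.mk ((val a + 10) % 20) (Nat.mod_lt _ (by norm_num))

lemma shift_val {a : S10} (h : val a < 10) : val (shift a) = val a + 10 := by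
  show (val a + 10) % 20 = val a + 10
  omega

lemma not_le_shift {a : S10} (h : val a < 10) : ¬ a ≤ shift a := by
  rw [le_iff]
  rintro (heq | ⟨h1, h2, h3⟩)
  · have := congrArg val heq; rw [shift_val h] at this; omega
  · exact h3 (shift_val h)

lemma not_shift_le {a : S10} (h : val a < 10) : ¬ shift a ≤ a := by
  rw [le_iff]
  rintro (heq | ⟨h1, h2, h3⟩)
  · have := congrArg val heq; rw [shift_val h] at this; omega
  · rw [shift_val h] at h1; omega

lemma le_shift_of_ne {a b : S10} (ha : val a < 10) (hb : val b < 10) (hne : a ≠ b) :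
    a ≤ shift b := by
  rw [le_iff]
  right
  have hv : val a ≠ val b := fun h => hne (ext h)
  rw [shift_val hb]
  omega

lemma cardS10 : Fintype.card S10 = 20 := rfl

end S10

lemma dimLE_of_map {α β : Type*} [PartialOrder α] [PartialOrder β] {d : ℕ}
    (f : β → α) (hmono : ∀ x y : β, x ≤ y ↔ f x ≤ f y) (h : dimLE α d) : dimLE β d := by
  obtain ⟨L, hext, hint⟩ := h
  have hinj : Function.Injective f := fun x y hxy =>
    le_antisymm ((hmono x y).2 (le_of_eq hxy)) ((hmono y x).2 (le_of_eq hxy.symm))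
  refine ⟨fun i => @LinearOrder.lift' β α (L i) f hinj, ?_, ?_⟩
  · intro i x y hxy
    show (L i).le (f x) (f y)
    exact hext i _ _ ((hmono x y).1 hxy)
  · intro x y hall
    exact (hmono x y).2 (hint _ _ fun i => hall i)

open S10 in
theorem s10_bound (S : Finset S10) (h : dimLE {x // x ∈ S} 2) : S.card ≤ 12 := by
  classical
  by_contra hc
  push_neg at hc
  -- the set of "complete pairs"
  set T : Finset S10 := Finset.univ.filter (fun a => val a < 10 ∧ a ∈ S ∧ shift a ∈ S) with hT
  have hT3 : 2 < T.card := by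
    set Lo : Finset S10 := S.filter (fun a => val a < 10) with hLo
    set Hi : Finset S10 := S.filter (fun a => ¬ val a < 10) with hHi
    have hsplit : Lo.card + Hi.card = S.card := Finset.card_filter_add_card_filter_not _
    set unshift : S10 → S10 := fun b => Fin.mk (val b % 10) (by omega) with hun
    have hunval : ∀ b : S10, val (unshift b) = val b % 10 := fun b => rfl
    set Hi' : Finset S10 := Hi.image unshift with hHi'
    have hinj : Set.InjOn unshift Hi := by
      intro x hx y hy hxy
      rw [hHi, Finset.coe_filter] at hx hy
      have hxv : ¬ val x < 10 := hx.2
      have hyv : ¬ val y < 10 := hy.2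
      have := congrArg val hxy
      rw [hunval, hunval] at this
      have hx20 : val x < 20 := (show x.1 < 20 from x.2)
      have hy20 : val y < 20 := (show y.1 < 20 from y.2)
      exact ext (by omega)
    have hHicard : Hi'.card = Hi.card := Finset.card_image_of_injOn hinj
    have hsub : Lo ∩ Hi' ⊆ T := by
      intro a ha
      rw [Finset.mem_inter] at ha
      obtain ⟨haLo, haHi'⟩ := ha
      rw [hLo, Finset.mem_filter] at haLo
      rw [hHi', Finset.mem_image] at haHi'
      obtain ⟨b, hb, hba⟩ := haHi'
      rw [hHi, Finset.mem_filter] at hb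
      have hb20 : val b < 20 := b.2
      have hval : val a = val b - 10 := by
        have := congrArg val hba; rw [hunval] at this
        have := hb.2; omega
      have hba2 : shift a = b := by
        apply ext; rw [shift_val haLo.2]
        have := hb.2; omega
      rw [hT, Finset.mem_filter]
      exact ⟨Finset.mem_univ _, haLo.2, haLo.1, hba2 ▸ hb.1⟩
    set D : Finset S10 := Finset.univ.filter (fun a => val a < 10) with hDdef
    have hDsub : Lo ∪ Hi' ⊆ D := by
      intro a ha
      rw [Finset.mem_union] at ha
      rw [hDdef, Finset.mem_filter]
      refine ⟨Finset.mem_univ _, ?_⟩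
      rcases ha with ha | ha
      · exact (Finset.mem_filter.1 ha).2
      · obtain ⟨b, _, hba⟩ := Finset.mem_image.1 ha
        have := congrArg val hba; rw [hunval] at this; omega
    have hD : D.card = 10 := by
      rw [hDdef]; decide
    have h1 : (Lo ∪ Hi').card + (Lo ∩ Hi').card = Lo.card + Hi'.card :=
      Finset.card_union_add_card_inter _ _
    have h2 : (Lo ∪ Hi').card ≤ 10 := hD ▸ Finset.card_le_card hDsub
    have := Finset.card_le_card hsub
    omega
  obtain ⟨a, b, c, haT, hbT, hcT, hab, hac, hbc⟩ := Finset.two_lt_card_iff.1 hT3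
  obtain ⟨L, hext, hint⟩ := h
  rw [hT, Finset.mem_filter] at haT hbT hcT
  obtain ⟨-, ha1, ha2, ha3⟩ := haT
  obtain ⟨-, hb1, hb2, hb3⟩ := hbT
  obtain ⟨-, hc1, hc2, hc3⟩ := hcT
  have pick : ∀ (x : S10) (hxS : x ∈ S) (hxS' : shift x ∈ S), val x < 10 →
      ∃ t : Fin 2, (L t).le ⟨shift x, hxS'⟩ ⟨x, hxS⟩ := by
    intro x hxS hxS' hx
    by_contra hno
    push_neg at hno
    have hall : ∀ t, (L t).le (⟨x, hxS⟩ : {y // y ∈ S}) ⟨shift x, hxS'⟩ := by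
      intro t
      rcases (L t).le_total (⟨x, hxS⟩ : {y // y ∈ S}) ⟨shift x, hxS'⟩ with h' | h'
      · exact h'
      · exact absurd h' (@not_le_of_gt _ (L t).toPreorder _ _ (hno t))
    have : (⟨x, hxS⟩ : {y // y ∈ S}) ≤ ⟨shift x, hxS'⟩ := hint _ _ hall
    exact not_le_shift hx (Subtype.mk_le_mk.1 this)
  have key : ∀ (x y : S10) (hx1 : val x < 10) (hy1 : val y < 10) (hxy : x ≠ y)
      (hxS : x ∈ S) (hxS' : shift x ∈ S) (hyS : y ∈ S) (hyS' : shift y ∈ S) (t : Fin 2),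
      (L t).le ⟨shift x, hxS'⟩ ⟨x, hxS⟩ → (L t).le ⟨shift y, hyS'⟩ ⟨y, hyS⟩ → False := by
    intro x y hx1 hy1 hxy hxS hxS' hyS hyS' t d1 d2
    have cross1 : (⟨x, hxS⟩ : {z // z ∈ S}) ≤ ⟨shift y, hyS'⟩ :=
      Subtype.mk_le_mk.2 (le_shift_of_ne hx1 hy1 hxy)
    have cross2 : (⟨y, hyS⟩ : {z // z ∈ S}) ≤ ⟨shift x, hxS'⟩ :=
      Subtype.mk_le_mk.2 (le_shift_of_ne hy1 hx1 hxy.symm)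
    have e1 : (L t).le ⟨x, hxS⟩ ⟨shift y, hyS'⟩ := hext t _ _ cross1
    have e2 : (L t).le ⟨y, hyS⟩ ⟨shift x, hxS'⟩ := hext t _ _ cross2
    have chain : (L t).le ⟨shift y, hyS'⟩ ⟨x, hxS⟩ :=
      (L t).le_trans _ _ _ d2 ((L t).le_trans _ _ _ e2 d1)
    have heq : (⟨x, hxS⟩ : {z // z ∈ S}) = ⟨shift y, hyS'⟩ := (L t).le_antisymm _ _ e1 chain
    have h1 : x = shift y := congrArg Subtype.val heq
    have h2 := congrArg val h1
    rw [shift_val hy1] at h2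
    omega
  obtain ⟨ta, hta⟩ := pick a ha2 ha3 ha1
  obtain ⟨tb, htb⟩ := pick b hb2 hb3 hb1
  obtain ⟨tc, htc⟩ := pick c hc2 hc3 hc1
  have tri : ta = tb ∨ ta = tc ∨ tb = tc := by
    rcases ta with ⟨va, hva⟩; rcases tb with ⟨vb, hvb⟩; rcases tc with ⟨vc, hvc⟩
    simp only [Fin.mk.injEq]
    omega
  rcases tri with h' | h' | h'
  · exact key a b ha1 hb1 hab ha2 ha3 hb2 hb3 ta hta (h' ▸ htb)
  · exact key a c ha1 hc1 hac ha2 ha3 hc2 hc3 ta hta (h' ▸ htc)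
  · exact key b c hb1 hc1 hbc hb2 hb3 hc2 hc3 tb htb (h' ▸ htc)

/-- `k`-fold lexicographic power of `S10`. -/
def PP : ℕ → Type
  | 0 => PUnit
  | k+1 => Lex (S10 × PP k)

instance PP.instPO : ∀ k, PartialOrder (PP k)
  | 0 => inferInstanceAs (PartialOrder PUnit)
  | k+1 => letI := PP.instPO k; inferInstanceAs (PartialOrder (Lex (S10 × PP k)))

instance PP.instDEq : ∀ k, DecidableEq (PP k)
  | 0 => inferInstanceAs (DecidableEq PUnit)
  | k+1 => letI := PP.instDEq k; inferInstanceAs (DecidableEq (Lex (S10 × PP k)))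

instance PP.instFT : ∀ k, Fintype (PP k)
  | 0 => inferInstanceAs (Fintype PUnit)
  | k+1 => letI := PP.instFT k; letI := PP.instDEq k
           inferInstanceAs (Fintype (Lex (S10 × PP k)))

lemma PP.card : ∀ k, Fintype.card (PP k) = 20 ^ k
  | 0 => rfl
  | k+1 => by
    have : Fintype.card (PP (k+1)) = Fintype.card (S10 × PP k) :=
      Fintype.card_congr (toLex (α := S10 × PP k)).symm
    rw [this, Fintype.card_prod, S10.cardS10, PP.card k]
    ring

theorem pp_bound : ∀ k (A : Finset (PP k)), dimLE {x // x ∈ A} 2 → A.card ≤ 12 ^ k := by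
  intro k
  induction k with
  | zero =>
    intro A _
    calc A.card ≤ Fintype.card (PP 0) := Finset.card_le_univ A
    _ = 1 := rfl
  | succ k ih =>
    intro A hA
    classical
    -- slices
    set slice : S10 → Finset (PP k) := fun s =>
      (A.filter (fun x => (ofLex x).1 = s)).image (fun x => (ofLex x).2) with hslice
    have mem_slice : ∀ s (q : PP k), q ∈ slice s ↔ toLex ((s, q) : S10 × PP k) ∈ A := by
      intro s q
      rw [hslice]
      simp only [Finset.mem_image, Finset.mem_filter]
      constructor
      · rintro ⟨x, ⟨hxA, hx1⟩, hx2⟩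
        have : toLex ((s, q) : S10 × PP k) = x := by
          rw [← hx1, ← hx2]; rfl
        rwa [this]
      · intro hq
        exact ⟨toLex (s, q), ⟨hq, rfl⟩, rfl⟩
    have slice_bound : ∀ s, (slice s).card ≤ 12 ^ k := by
      intro s
      apply ih
      refine dimLE_of_map (α := {x // x ∈ A})
        (fun q => ⟨toLex (s, q.val), (mem_slice s q.val).1 q.2⟩) ?_ hA
      intro q q'
      constructor
      · intro hqq'
        show toLex ((s, q.val) : S10 × PP k) ≤ toLex (s, q'.val)
        rw [Prod.Lex.le_iff]
        exact Or.inr ⟨rfl, hqq'⟩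
      · intro hle
        have : toLex ((s, q.val) : S10 × PP k) ≤ toLex (s, q'.val) := hle
        rw [Prod.Lex.le_iff] at this
        rcases this with h' | h'
        · exact absurd h' (lt_irrefl s)
        · exact h'.2
    -- the index set
    set T : Finset S10 := A.image (fun x => (ofLex x).1) with hTdef
    have hTbound : T.card ≤ 12 := by
      apply s10_bound
      obtain ⟨L, hext, hint⟩ := hA
      have hrep : ∀ s : {s // s ∈ T}, ∃ x : {x // x ∈ A}, (ofLex x.val).1 = s.val := by
        rintro ⟨s, hs⟩
        obtain ⟨x, hxA, hx⟩ := Finset.mem_image.1 hs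
        exact ⟨⟨x, hxA⟩, hx⟩
      choose rep hrep using hrep
      have repinj : Function.Injective rep := by
        intro s s' hss'
        apply Subtype.ext
        rw [← hrep s, ← hrep s', hss']
      refine ⟨fun i => @LinearOrder.lift' _ _ (L i) rep repinj, ?_, ?_⟩
      · intro i s s' hss'
        show (L i).le (rep s) (rep s')
        rcases eq_or_ne s s' with rfl | hne
        · exact (L i).le_refl _
        · have hlt : s.val < s'.val := by
            refine lt_of_le_of_ne hss' ?_
            intro heq
            exact hne (Subtype.ext heq)
          have : (rep s).val ≤ (rep s').val := by
            have h1 : toLex (ofLex (rep s).val) ≤ toLex (ofLex (rep s').val) := by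
              rw [Prod.Lex.le_iff]
              left
              exact (hrep s).trans_lt (hlt.trans_eq (hrep s').symm)
            exact h1
          exact hext i _ _ this
      · intro s s' hall
        have : (rep s).val ≤ (rep s').val := hint _ _ fun i => hall i
        have h1 : toLex (ofLex (rep s).val) ≤ toLex (ofLex (rep s').val) := this
        rw [Prod.Lex.le_iff] at h1
        show s.val ≤ s'.val
        rcases h1 with h' | h'
        · exact le_of_lt ((hrep s).symm.trans_lt (h'.trans_eq (hrep s')))
        · exact le_of_eq ((hrep s).symm.trans (h'.1.trans (hrep s')))
    -- counting
    have hcount : A.card = ∑ s ∈ T, (A.filter (fun x => (ofLex x).1 = s)).card :=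
      Finset.card_eq_sum_card_image _ _
    have hfib : ∀ s, (A.filter (fun x => (ofLex x).1 = s)).card = (slice s).card := by
      intro s
      rw [hslice]
      refine (Finset.card_image_of_injOn ?_).symm
      intro x hx y hy hxy
      rw [Finset.coe_filter] at hx hy
      have : ofLex x = ofLex y := Prod.ext (hx.2.trans hy.2.symm) hxy
      exact this
    calc A.card = ∑ s ∈ T, (A.filter (fun x => (ofLex x).1 = s)).card := hcount
      _ = ∑ s ∈ T, (slice s).card := Finset.sum_congr rfl fun s _ => hfib s
      _ ≤ ∑ _s ∈ T, 12 ^ k := Finset.sum_le_sum fun s _ => slice_bound s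
      _ = T.card * 12 ^ k := Finset.sum_const _
      _ ≤ 12 * 12 ^ k := Nat.mul_le_mul_right _ hTbound
      _ = 12 ^ (k+1) := by ring

section SigmaFiber

variable {ι : Type*} [DecidableEq ι] {α : ι → Type*} [∀ i, Fintype (α i)] [∀ i, DecidableEq (α i)]

lemma fiber_card (A : Finset (Σ i, α i)) (j : ι) :
    (A.filter (fun x => x.1 = j)).card
      = (Finset.univ.filter (fun q : α j => (⟨j, q⟩ : Σ i, α i) ∈ A)).card := by
  classical
  apply Finset.card_bij (fun x hx => (show x.1 = j from (Finset.mem_filter.1 hx).2) ▸ x.2)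
  · rintro ⟨xi, xa⟩ hx
    have hmem := (Finset.mem_filter.1 hx).1
    have h : xi = j := (Finset.mem_filter.1 hx).2
    subst h
    simpa using hmem
  · rintro ⟨xi, xa⟩ hx ⟨yi, ya⟩ hy hxy
    have h1 : xi = j := (Finset.mem_filter.1 hx).2
    have h2 : yi = j := (Finset.mem_filter.1 hy).2
    subst h1; subst h2
    simpa using hxy
  · intro q hq
    refine ⟨⟨j, q⟩, Finset.mem_filter.2 ⟨(Finset.mem_filter.1 hq).2, rfl⟩, rfl⟩

end SigmaFiber

lemma ofDigits_fin (b : ℕ) (l : List ℕ) :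
    Nat.ofDigits b l = ∑ i : Fin l.length, l.get i * b ^ (i : ℕ) := by
  induction l with
  | nil => simp [Nat.ofDigits]
  | cons d l ih =>
    rw [Nat.ofDigits_cons, ih]
    show _ = ∑ i : Fin (l.length + 1), (d :: l).get i * b ^ (i : ℕ)
    rw [Fin.sum_univ_succ]
    simp only [List.get_cons_zero, Fin.val_zero, pow_zero, mul_one, List.get_cons_succ,
      Fin.val_succ]
    rw [Finset.mul_sum]
    congr 1
    apply Finset.sum_congr rfl
    intro i _
    rw [show (d :: l).get i.succ = l.get i from rfl]
    ring

lemma QQcard (l : List ℕ) :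
    Fintype.card (Σ j : (Σ i : Fin l.length, Fin (l.get i)), PP j.1.val)
      = Nat.ofDigits 20 l := by
  rw [Fintype.card_sigma]
  have h1 : ∀ j : (Σ i : Fin l.length, Fin (l.get i)),
      Fintype.card (PP j.1.val) = 20 ^ (j.1 : ℕ) := fun j => PP.card _
  rw [Finset.sum_congr rfl (fun j _ => h1 j)]
  rw [← Finset.univ_sigma_univ, Finset.sum_sigma]
  rw [ofDigits_fin]
  apply Finset.sum_congr rfl
  intro i _
  simp [mul_comm]

lemma QQbound (l : List ℕ)
    (A : Finset (Σ j : (Σ i : Fin l.length, Fin (l.get i)), PP j.1.val))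
    (hA : dimLE {x // x ∈ A} 2) :
    A.card ≤ ∑ i : Fin l.length, l.get i * 12 ^ (i : ℕ) := by
  classical
  rw [Finset.card_eq_sum_card_fiberwise (f := Sigma.fst) (t := Finset.univ)
    (fun x _ => Finset.mem_univ _)]
  have hfib : ∀ j : (Σ i : Fin l.length, Fin (l.get i)),
      (A.filter (fun x => x.1 = j)).card ≤ 12 ^ (j.1 : ℕ) := by
    intro j
    rw [fiber_card]
    apply pp_bound
    set B := Finset.univ.filter
      (fun q : PP j.1.val => (⟨j, q⟩ : Σ j' : (Σ i : Fin l.length, Fin (l.get i)), PP j'.1.val) ∈ A)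
      with hB
    have hmem : ∀ q : PP j.1.val, q ∈ B ↔
        (⟨j, q⟩ : Σ j' : (Σ i : Fin l.length, Fin (l.get i)), PP j'.1.val) ∈ A := by
      intro q; rw [hB, Finset.mem_filter]; simp
    refine dimLE_of_map (α := {x // x ∈ A}) (fun q => ⟨⟨j, q.val⟩, (hmem q.val).1 q.2⟩) ?_ hA
    intro q q'
    constructor
    · intro hqq'
      show (⟨j, q.val⟩ : Σ j' : (Σ i : Fin l.length, Fin (l.get i)), PP j'.1.val) ≤ ⟨j, q'.val⟩
      exact Sigma.mk_le_mk_iff.2 hqq'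
    · intro hle
      have h3 : (⟨j, q.val⟩ : Σ j' : (Σ i : Fin l.length, Fin (l.get i)), PP j'.1.val)
          ≤ ⟨j, q'.val⟩ := hle
      have h4 := Sigma.mk_le_mk_iff.1 h3
      exact h4
  calc ∑ j ∈ Finset.univ, (A.filter (fun x => x.1 = j)).card
      ≤ ∑ j : (Σ i : Fin l.length, Fin (l.get i)), 12 ^ (j.1 : ℕ) :=
        Finset.sum_le_sum fun j _ => hfib j
    _ = ∑ i : Fin l.length, l.get i * 12 ^ (i : ℕ) := by
        rw [← Finset.univ_sigma_univ, Finset.sum_sigma]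
        apply Finset.sum_congr rfl
        intro i _
        simp [mul_comm]

lemma twelve_lt : (12:ℝ) < (20:ℝ) ^ (0.8295:ℝ) := by
  have hnat : (12:ℕ)^10000 < 20^8295 := by decide +kernel
  have h0 : ((12:ℝ))^(10000:ℕ) < (20:ℝ)^(8295:ℕ) := by exact_mod_cast hnat
  have e2 : (12:ℝ) = ((12:ℝ)^(10000:ℕ)) ^ ((10000:ℝ)⁻¹) := by
    rw [← Real.rpow_natCast (12:ℝ) 10000, ← Real.rpow_mul (by norm_num : (0:ℝ) ≤ 12)]
    norm_num
  have e1 : ((20:ℝ)^(8295:ℕ)) ^ ((10000:ℝ)⁻¹) = (20:ℝ)^(0.8295:ℝ) := by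
    rw [← Real.rpow_natCast (20:ℝ) 8295, ← Real.rpow_mul (by norm_num : (0:ℝ) ≤ 20)]
    norm_num
  calc (12:ℝ) = ((12:ℝ)^(10000:ℕ)) ^ ((10000:ℝ)⁻¹) := e2
    _ < ((20:ℝ)^(8295:ℕ)) ^ ((10000:ℝ)⁻¹) :=
        Real.rpow_lt_rpow (by positivity) h0 (by norm_num)
    _ = (20:ℝ)^(0.8295:ℝ) := e1

/-- Corollary 2.2: for all sufficiently large `n`, there is an `n`-element poset whose
largest induced subposet of dimension at most 2 has size at most `n^0.8295`. -/
theorem exStar_D3_upper : ∃ N : ℕ, ∀ n : ℕ, N ≤ n →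
    ∃ (P : Type) (_ : PartialOrder P) (_ : Fintype P), Fintype.card P = n ∧
      ∀ S : Finset P, dimLE {x // x ∈ S} 2 → (S.card : ℝ) ≤ (n : ℝ) ^ (0.8295 : ℝ) := by
  set r : ℝ := (20:ℝ) ^ (0.8295:ℝ) / 12 with hrdef
  have hr : 1 < r := by
    rw [hrdef, lt_div_iff₀ (by norm_num : (0:ℝ) < 12)]
    linarith [twelve_lt]
  have hr12 : r * 12 = (20:ℝ) ^ (0.8295:ℝ) := by
    rw [hrdef]; field_simp
  obtain ⟨K0, hK0⟩ := pow_unbounded_of_one_lt (21:ℝ) hr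
  refine ⟨20 ^ (K0 + 1), ?_⟩
  intro n hn
  have hn0 : n ≠ 0 := by
    have : 0 < 20 ^ (K0 + 1) := pow_pos (by norm_num) _
    omega
  set l : List ℕ := Nat.digits 20 n with hl
  set K : ℕ := Nat.log 20 n with hK
  have hlen : l.length = K + 1 := Nat.digits_len 20 n (by norm_num) hn0
  refine ⟨Σ j : (Σ i : Fin l.length, Fin (l.get i)), PP j.1.val, inferInstance, inferInstance,
    ?_, ?_⟩
  · rw [QQcard l, hl]
    exact Nat.ofDigits_digits 20 n
  · intro S hS
    have h1 := QQbound l S hS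
    have hdig : ∀ i : Fin l.length, l.get i ≤ 19 := by
      intro i
      have hm : l.get i ∈ l := l.get_mem i
      have := Nat.digits_lt_base (by norm_num : 1 < 20)
        (show l.get i ∈ Nat.digits 20 n from hm)
      omega
    have h1' : (S.card:ℝ) ≤ ∑ i : Fin l.length, (l.get i : ℝ) * 12^(i:ℕ) := by
      exact_mod_cast h1
    have h3 : ∑ i : Fin l.length, (l.get i:ℝ) * 12^(i:ℕ)
        ≤ ∑ i : Fin l.length, (19:ℝ) * 12^(i:ℕ) := by
      apply Finset.sum_le_sum
      intro i _
      have h19 : (l.get i : ℝ) ≤ 19 := by exact_mod_cast hdig i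
      have hp : (0:ℝ) ≤ 12 ^ (i:ℕ) := by positivity
      nlinarith
    have h4 : ∑ i : Fin l.length, (19:ℝ) * 12^(i:ℕ) = 19 * ((12^l.length - 1)/11) := by
      rw [← Finset.mul_sum, Fin.sum_univ_eq_sum_range (fun i => (12:ℝ)^i) l.length,
        geom_sum_eq (by norm_num : (12:ℝ) ≠ 1)]
      norm_num
    have hq : (S.card : ℝ) ≤ 21 * 12 ^ K := by
      have hp : (0:ℝ) < 12 ^ K := by positivity
      have h5 : (S.card:ℝ) ≤ 19 * ((12^(K+1) - 1)/11) := by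
        rw [← hlen]
        calc (S.card:ℝ) ≤ ∑ i : Fin l.length, (l.get i : ℝ) * 12^(i:ℕ) := h1'
          _ ≤ ∑ i : Fin l.length, (19:ℝ) * 12^(i:ℕ) := h3
          _ = 19 * ((12^l.length - 1)/11) := h4
      have h6 : (12:ℝ)^(K+1) = 12 * 12^K := by ring
      rw [h6] at h5
      nlinarith
    have hKK : K0 ≤ K := by
      have h5 : Nat.log 20 (20 ^ (K0+1)) = K0 + 1 := Nat.log_pow (by norm_num) _
      have h6 := Nat.log_mono_right (b := 20) hn
      omega
    have hrK : (21:ℝ) ≤ r ^ K :=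
      le_trans (le_of_lt hK0) (pow_le_pow_right₀ (le_of_lt hr) hKK)
    have hchain : 21 * (12:ℝ)^K ≤ ((20:ℝ)^(0.8295:ℝ))^K := by
      calc 21 * (12:ℝ)^K ≤ r^K * 12^K := by
            have hp : (0:ℝ) ≤ 12^K := by positivity
            nlinarith
        _ = (r*12)^K := (mul_pow r 12 K).symm
        _ = ((20:ℝ)^(0.8295:ℝ))^K := by rw [hr12]
    have hpowswap : ((20:ℝ)^(0.8295:ℝ))^K = ((20:ℝ)^K) ^ (0.8295:ℝ) := by
      rw [← Real.rpow_natCast ((20:ℝ)^(0.8295:ℝ)) K, ← Real.rpow_natCast (20:ℝ) K,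
        ← Real.rpow_mul (by norm_num : (0:ℝ) ≤ 20), ← Real.rpow_mul (by norm_num : (0:ℝ) ≤ 20),
        mul_comm]
    have hfinal : ((20:ℝ)^K) ^ (0.8295:ℝ) ≤ (n:ℝ) ^ (0.8295:ℝ) := by
      apply Real.rpow_le_rpow (by positivity) ?_ (by norm_num)
      have h7 := Nat.pow_log_le_self 20 hn0
      rw [hK]
      exact_mod_cast h7
    calc (S.card : ℝ) ≤ 21 * 12 ^ K := hq
      _ ≤ ((20:ℝ)^(0.8295:ℝ))^K := hchain
      _ = ((20:ℝ)^K) ^ (0.8295:ℝ) := hpowswap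
      _ ≤ (n:ℝ) ^ (0.8295:ℝ) := hfinal
end

section
/- For every integer d ≥ 2, every integer m ≥ 2, and every ε > 0, for all sufficiently large n there exists an n-element poset whose largest induced subposet of order dimension at most d has size at most n^{log_{2m}(m+d) + ε}. -/
namespace ExStar

lemma dimLE_mono {γ α : Type*} [PartialOrder γ] [PartialOrder α] {d : ℕ}
    (f : γ → α) (hf : ∀ x y, x ≤ y ↔ f x ≤ f y) (h : dimLE α d) : dimLE γ d := by
  obtain ⟨L, hL1, hL2⟩ := h
  have hinj : Function.Injective f := fun x y hxy =>
    le_antisymm ((hf x y).2 (le_of_eq hxy)) ((hf y x).2 (le_of_eq hxy.symm))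
  refine ⟨fun i => letI := L i; LinearOrder.lift' f hinj, ?_, ?_⟩
  · intro i x y hxy
    exact hL1 i _ _ ((hf x y).1 hxy)
  · intro x y hall
    exact (hf x y).2 (hL2 _ _ fun i => hall i)

/-- The standard example `S_m`. -/
def Std (m : ℕ) : Type := Fin m ⊕ Fin m

def stdLE {m : ℕ} : Std m → Std m → Prop
  | Sum.inl i, Sum.inl j => i = j
  | Sum.inl i, Sum.inr j => i ≠ j
  | Sum.inr _, Sum.inl _ => False
  | Sum.inr i, Sum.inr j => i = j

instance {m : ℕ} : DecidableEq (Std m) := inferInstanceAs (DecidableEq (Fin m ⊕ Fin m))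
instance {m : ℕ} : Fintype (Std m) := inferInstanceAs (Fintype (Fin m ⊕ Fin m))

instance {m : ℕ} : PartialOrder (Std m) where
  le := stdLE
  le_refl x := by cases x <;> simp [stdLE]
  le_trans x y z hxy hyz := by
    cases x <;> cases y <;> cases z <;> simp_all [stdLE]
  le_antisymm x y hxy hyx := by
    cases x <;> cases y <;> simp_all [stdLE] <;> rfl

lemma std_card (m : ℕ) : Fintype.card (Std m) = 2 * m := by
  show Fintype.card (Fin m ⊕ Fin m) = 2 * m
  simp [two_mul]

lemma std_le_iff {m : ℕ} (x y : Std m) : x ≤ y ↔ stdLE x y := Iff.rfl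

def Std.a {m : ℕ} (i : Fin m) : Std m := Sum.inl i
def Std.b {m : ℕ} (i : Fin m) : Std m := Sum.inr i

lemma std_le_ab {m : ℕ} (i j : Fin m) : Std.a i ≤ Std.b j ↔ i ≠ j := Iff.rfl
lemma std_le_aa {m : ℕ} (i j : Fin m) : Std.a i ≤ Std.a j ↔ i = j := Iff.rfl

lemma std_cases {m : ℕ} (x : Std m) : (∃ i, x = Std.a i) ∨ (∃ i, x = Std.b i) :=
  match x with
  | Sum.inl i => Or.inl ⟨i, rfl⟩
  | Sum.inr i => Or.inr ⟨i, rfl⟩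

/-- Key bound for the standard example. -/
lemma std_bound (m d : ℕ) (hd : 1 ≤ d) (S : Finset (Std m))
    (hS : dimLE {x // x ∈ S} d) : S.card ≤ m + d := by
  classical
  set I : Finset (Fin m) :=
    Finset.univ.filter (fun i => Std.a i ∈ S ∧ Std.b i ∈ S) with hI
  have hmem : ∀ i ∈ I, Std.a i ∈ S ∧ Std.b i ∈ S := by
    intro i hi; simpa [hI] using (Finset.mem_filter.mp hi).2
  have hIcard : I.card ≤ d := by
    by_contra hcon
    push_neg at hcon
    obtain ⟨L, hL1, hL2⟩ := hS
    have key : ∀ i (hi : i ∈ I), ∃ j : Fin d,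
        ¬ (L j).le ⟨Std.a i, (hmem i hi).1⟩ ⟨Std.b i, (hmem i hi).2⟩ := by
      intro i hi
      by_contra hc
      push_neg at hc
      have h1 : (⟨Std.a i, (hmem i hi).1⟩ : {x // x ∈ S}) ≤ ⟨Std.b i, (hmem i hi).2⟩ :=
        hL2 _ _ hc
      have h2 : Std.a i ≤ Std.b i := (Subtype.mk_le_mk (α := Std m)).mp h1
      simp [std_le_ab] at h2
    let g : Fin m → Fin d := fun i =>
      if h : i ∈ I then (key i h).choose else ⟨0, hd⟩
    have hgspec : ∀ i (hi : i ∈ I),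
        ¬ (L (g i)).le ⟨Std.a i, (hmem i hi).1⟩ ⟨Std.b i, (hmem i hi).2⟩ := by
      intro i hi
      rw [show g i = (key i hi).choose from dif_pos hi]
      exact (key i hi).choose_spec
    obtain ⟨i, hi, i', hi', hne, heq⟩ :=
      Finset.exists_ne_map_eq_of_card_lt_of_maps_to
        (t := (Finset.univ : Finset (Fin d))) (by simpa using hcon)
        (fun a _ => Finset.mem_univ (g a))
    have hji := hgspec i hi
    have hji' := hgspec i' hi'
    rw [heq] at hji
    set j := g i' with hj
    have h1 : (L j).le ⟨Std.b i', (hmem i' hi').2⟩ ⟨Std.a i', (hmem i' hi').1⟩ :=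
      ((L j).le_total _ _).resolve_left hji'
    have h2 : (L j).le ⟨Std.a i, (hmem i hi).1⟩ ⟨Std.b i', (hmem i' hi').2⟩ :=
      hL1 _ _ _ (((Subtype.mk_le_mk (α := Std m)).mpr ((std_le_ab i i').mpr hne)))
    have h3 : (L j).le ⟨Std.a i', (hmem i' hi').1⟩ ⟨Std.b i, (hmem i hi).2⟩ :=
      hL1 _ _ _ (((Subtype.mk_le_mk (α := Std m)).mpr ((std_le_ab i' i).mpr (Ne.symm hne))))
    exact hji ((L j).le_trans _ _ _ ((L j).le_trans _ _ _ h2 h1) h3)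
  have hcount : S.card ≤ m + I.card := by
    rw [Finset.card_eq_sum_card_fiberwise
      (f := fun x : Std m => Sum.elim id id x) (s := S) (t := Finset.univ)
      (fun x _ => Finset.mem_univ _)]
    have hb : ∀ i : Fin m,
        (S.filter (fun x => Sum.elim id id x = i)).card ≤ if i ∈ I then 2 else 1 := by
      intro i
      have hsub : S.filter (fun x => Sum.elim id id x = i) ⊆ {Std.a i, Std.b i} := by
        intro x hx
        obtain ⟨hxS, hxe⟩ := Finset.mem_filter.mp hx
        rcases std_cases x with ⟨a, rfl⟩ | ⟨a, rfl⟩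
        · have : a = i := by simpa [Std.a] using hxe
          subst this; exact Finset.mem_insert_self _ _
        · have : a = i := by simpa [Std.b] using hxe
          subst this; exact Finset.mem_insert_of_mem (Finset.mem_singleton_self _)
      by_cases hiI : i ∈ I
      · rw [if_pos hiI]
        exact (Finset.card_le_card hsub).trans
          ((Finset.card_insert_le _ _).trans (by exact Nat.add_le_add_right (le_of_eq (Finset.card_singleton _)) 1))
      · rw [if_neg hiI]
        refine Finset.card_le_one.mpr (fun x hx y hy => ?_)
        have hxS := (Finset.mem_filter.mp hx).1
        have hyS := (Finset.mem_filter.mp hy).1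
        have hx2 : x = Std.a i ∨ x = Std.b i := (Finset.mem_insert.mp (hsub hx)).imp_right Finset.mem_singleton.mp
        have hy2 : y = Std.a i ∨ y = Std.b i := (Finset.mem_insert.mp (hsub hy)).imp_right Finset.mem_singleton.mp
        rcases hx2 with h1 | h1 <;> rcases hy2 with h2 | h2 <;> subst h1 <;> subst h2
        · rfl
        · exact absurd (Finset.mem_filter.mpr ⟨Finset.mem_univ i, hxS, hyS⟩) hiI
        · exact absurd (Finset.mem_filter.mpr ⟨Finset.mem_univ i, hyS, hxS⟩) hiI
        · rfl
    refine (Finset.sum_le_sum (fun i _ => hb i)).trans ?_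
    have : ∀ i : Fin m, (if i ∈ I then 2 else 1) = 1 + (if i ∈ I then 1 else 0) := by
      intro i; split <;> rfl
    simp_rw [this]
    rw [Finset.sum_add_distrib, Finset.sum_boole]
    simp [Finset.filter_mem_eq_inter]
  omega

/-- Card bound for lexicographic products. -/
lemma lex_bound {α β : Type*} [PartialOrder α] [PartialOrder β]
    [DecidableEq α] [Fintype β] {d A B : ℕ}
    (hα : ∀ T : Finset α, dimLE {x // x ∈ T} d → T.card ≤ A)
    (hβ : ∀ T : Finset β, dimLE {y // y ∈ T} d → T.card ≤ B)
    (S : Finset (α ×ₗ β)) (hS : dimLE {x // x ∈ S} d) : S.card ≤ A * B := by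
  classical
  set Base : Finset α := S.image (fun x => (ofLex x).1) with hBase
  have hfib : ∀ b : α, b ∈ Base →
      (S.filter (fun x => (ofLex x).1 = b)).card ≤ B := by
    intro b _
    set Fib : Finset β := Finset.univ.filter (fun y => toLex (b, y) ∈ S) with hFib
    have hcardeq : (S.filter (fun x => (ofLex x).1 = b)).card = Fib.card := by
      apply Finset.card_bij (fun x _ => (ofLex x).2)
      · intro x hx
        obtain ⟨hxS, hx1⟩ := Finset.mem_filter.mp hx
        have : toLex (b, (ofLex x).2) = x := by
          rw [← hx1]; rfl
        simp only [hFib, Finset.mem_filter, Finset.mem_univ, true_and]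
        rwa [this]
      · intro x hx x' hx' hxy
        obtain ⟨_, hx1⟩ := Finset.mem_filter.mp hx
        obtain ⟨_, hx1'⟩ := Finset.mem_filter.mp hx'
        have : ofLex x = ofLex x' := Prod.ext (hx1.trans hx1'.symm) hxy
        exact ofLex_inj.mp this
      · intro y hy
        have hyS : toLex (b, y) ∈ S := by
          simpa [hFib] using hy
        exact ⟨toLex (b, y), Finset.mem_filter.mpr ⟨hyS, rfl⟩, rfl⟩
    rw [hcardeq]
    apply hβ
    apply dimLE_mono (f := fun y : {y // y ∈ Fib} =>
      (⟨toLex (b, y.1), by have h := y.2; simp only [hFib, Finset.mem_filter, Finset.mem_univ, true_and] at h; exact h⟩ :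
        {x // x ∈ S}))
    · intro y y'
      constructor
      · intro h
        exact Subtype.mk_le_mk.mpr (Prod.Lex.toLex_le_toLex.mpr (Or.inr ⟨rfl, h⟩))
      · intro h
        rcases Prod.Lex.toLex_le_toLex.mp (Subtype.mk_le_mk.mp h) with h1 | h1
        · exact absurd h1 (lt_irrefl b)
        · exact h1.2
    · exact hS
  have hbase : Base.card ≤ A := by
    apply hα
    have hsec : ∀ b : {b // b ∈ Base}, ∃ x : {x // x ∈ S}, (ofLex x.1).1 = b.1 := by
      intro b
      obtain ⟨x, hxS, hx1⟩ := Finset.mem_image.mp b.2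
      exact ⟨⟨x, hxS⟩, hx1⟩
    choose sec hsec1 using hsec
    apply dimLE_mono (f := sec)
    · intro b b'
      constructor
      · intro h
        rcases lt_or_eq_of_le h with h1 | h1
        · apply Subtype.mk_le_mk.mpr
          show (sec b).1 ≤ (sec b').1
          have : toLex (ofLex (sec b).1) ≤ toLex (ofLex (sec b').1) :=
            Prod.Lex.toLex_le_toLex.mpr
              (Or.inl (by rw [hsec1 b, hsec1 b']; exact Subtype.coe_lt_coe.mpr h1))
          simpa using this
        · rw [h1]
      · intro h
        have h2 : toLex (ofLex (sec b).1) ≤ toLex (ofLex (sec b').1) := by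
          simpa using (Subtype.mk_le_mk.mp h :)
        rcases Prod.Lex.toLex_le_toLex.mp h2 with h1 | h1
        · rw [hsec1 b, hsec1 b'] at h1
          exact le_of_lt (Subtype.coe_lt_coe.mp h1)
        · rw [hsec1 b, hsec1 b'] at h1
          exact le_of_eq (Subtype.ext h1.1)
    · exact hS
  calc S.card = ∑ b ∈ Base, (S.filter (fun x => (ofLex x).1 = b)).card :=
        Finset.card_eq_sum_card_fiberwise (fun x hx => Finset.mem_image_of_mem _ hx)
    _ ≤ ∑ _b ∈ Base, B := Finset.sum_le_sum hfib
    _ = Base.card * B := by rw [Finset.sum_const, smul_eq_mul]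
    _ ≤ A * B := Nat.mul_le_mul_right B hbase

/-- Iterated lexicographic power of the standard example. -/
def Pow (m : ℕ) : ℕ → Type
  | 0 => PUnit
  | k + 1 => Std m ×ₗ Pow m k

instance instPOPow (m : ℕ) : ∀ k, PartialOrder (Pow m k)
  | 0 => inferInstanceAs (PartialOrder PUnit)
  | k + 1 => letI := instPOPow m k; inferInstanceAs (PartialOrder (Std m ×ₗ Pow m k))

instance instDEPow (m : ℕ) : ∀ k, DecidableEq (Pow m k)
  | 0 => inferInstanceAs (DecidableEq PUnit)
  | k + 1 => letI := instDEPow m k; inferInstanceAs (DecidableEq (Std m × Pow m k))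

instance instFTPow (m : ℕ) : ∀ k, Fintype (Pow m k)
  | 0 => inferInstanceAs (Fintype PUnit)
  | k + 1 => letI := instFTPow m k; inferInstanceAs (Fintype (Std m × Pow m k))

lemma pow_card (m : ℕ) : ∀ k, Fintype.card (Pow m k) = (2 * m) ^ k
  | 0 => by
    show Fintype.card PUnit = _
    simp
  | k + 1 => by
    show Fintype.card (Std m × Pow m k) = _
    rw [Fintype.card_prod, std_card, pow_card m k, pow_succ]
    ring

lemma pow_bound (m d : ℕ) (hd : 1 ≤ d) :
    ∀ k, ∀ S : Finset (Pow m k), dimLE {x // x ∈ S} d → S.card ≤ (m + d) ^ k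
  | 0 => by
    intro S _
    have : S.card ≤ 1 := Finset.card_le_one.mpr (fun x _ y _ => Subsingleton.elim (α := PUnit.{1}) x y)
    simpa using this
  | k + 1 => by
    intro S hS
    have h := lex_bound (α := Std m) (β := Pow m k) (d := d) (A := m + d) (B := (m + d) ^ k)
      (std_bound m d hd) (pow_bound m d hd k) S hS
    calc S.card ≤ (m + d) * (m + d) ^ k := h
      _ = (m + d) ^ (k + 1) := by rw [pow_succ]; ring


lemma ofDigits_eq_sum (b : ℕ) (L : List ℕ) :
    Nat.ofDigits b L = ∑ i : Fin L.length, L.get i * b ^ (i : ℕ) := by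
  induction L with
  | nil => simp [Nat.ofDigits]
  | cons c T ih =>
    simp only [List.length_cons]
    rw [Nat.ofDigits_cons, ih, Fin.sum_univ_succ, Finset.mul_sum]
    simp only [pow_succ, List.get_cons_succ, Fin.val_succ, Fin.val_zero, pow_zero,
      List.get_cons_zero, mul_one]
    rw [add_right_inj]
    exact Finset.sum_congr rfl (fun i _ => by simp [List.get_cons_succ]; ring)

lemma geo_le (r : ℕ) (hr : 2 ≤ r) : ∀ K, ∑ i ∈ Finset.range K, r ^ i ≤ r ^ K
  | 0 => by simp
  | K + 1 => by
    rw [Finset.sum_range_succ, pow_succ]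
    have h := geo_le r hr K
    nlinarith [pow_pos (by omega : 0 < r) K]

lemma sigma_bound {ι : Type} [Fintype ι] [DecidableEq ι] {α : ι → Type}
    [∀ i, PartialOrder (α i)] [∀ i, Fintype (α i)] [∀ i, DecidableEq (α i)] {d : ℕ}
    {B : ι → ℕ} (hB : ∀ i (T : Finset (α i)), dimLE {x // x ∈ T} d → T.card ≤ B i)
    (S : Finset (Σ i, α i)) (hS : dimLE {x // x ∈ S} d) : S.card ≤ ∑ i, B i := by
  classical
  rw [Finset.card_eq_sum_card_fiberwise (f := Sigma.fst) (t := Finset.univ)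
    (fun x _ => Finset.mem_univ _)]
  refine Finset.sum_le_sum (fun i _ => ?_)
  set G : Finset (α i) := Finset.univ.filter (fun a => (⟨i, a⟩ : Σ i, α i) ∈ S) with hG
  have hcard : (S.filter (fun x => x.1 = i)).card = G.card := by
    symm
    apply Finset.card_bij (fun a _ => (⟨i, a⟩ : Σ i, α i))
    · intro a ha
      have haS : (⟨i, a⟩ : Σ i, α i) ∈ S := by
        simpa [hG] using ha
      exact Finset.mem_filter.mpr ⟨haS, rfl⟩
    · intro a _ a' _ h
      exact sigma_mk_injective h
    · intro x hx
      obtain ⟨hxS, hx1⟩ := Finset.mem_filter.mp hx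
      rcases x with ⟨j, a⟩
      dsimp at hx1
      subst hx1
      exact ⟨a, by simpa [hG] using hxS, rfl⟩
  rw [hcard]
  apply hB i
  apply dimLE_mono (f := fun a : {a // a ∈ G} =>
    (⟨⟨i, a.1⟩, (Finset.mem_filter.mp a.2).2⟩ : {x // x ∈ S}))
  · intro a b
    constructor
    · intro h
      exact (Subtype.mk_le_mk (α := Σ i, α i)).mpr (Sigma.mk_le_mk_iff.mpr (Subtype.coe_le_coe.mpr h))
    · intro h
      exact Subtype.coe_le_coe.mp (Sigma.mk_le_mk_iff.mp ((Subtype.mk_le_mk (α := Σ i, α i)).mp h))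
  · exact hS

theorem exStar_Dd_upper' (d m : ℕ) (hd : 2 ≤ d) (hm : 2 ≤ m) (ε : ℝ) (hε : 0 < ε) :
    ∃ N : ℕ, ∀ n : ℕ, N ≤ n →
      ∃ (P : Type) (_ : PartialOrder P) (_ : Fintype P), Fintype.card P = n ∧
        ∀ S : Finset P, dimLE {x // x ∈ S} d →
          (S.card : ℝ) ≤ (n : ℝ) ^ (Real.logb (2 * m) (m + d) + ε) := by
  classical
  set c : ℝ := Real.logb (2 * m) (m + d) with hc
  set bN : ℕ := 2 * m with hbN
  set rN : ℕ := m + d with hrN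
  have hb1 : 1 < bN := by omega
  have hr2 : 2 ≤ rN := by omega
  have hmR : (2:ℝ) ≤ (m:ℝ) := by exact_mod_cast hm
  have hdR : (2:ℝ) ≤ (d:ℝ) := by exact_mod_cast hd
  refine ⟨max 1 ⌈((bN * rN : ℕ) : ℝ) ^ (1 / ε)⌉₊, fun n hn => ?_⟩
  have hn1 : 1 ≤ n := le_trans (le_max_left _ _) hn
  have hn0 : n ≠ 0 := by omega
  set Lst : List ℕ := Nat.digits bN n with hLst
  set len : ℕ := Lst.length with hlen
  refine ⟨Σ p : (Σ i : Fin len, Fin (Lst.get i)), Pow m (p.1 : ℕ),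
    inferInstance, inferInstance, ?_, ?_⟩
  · -- cardinality is n
    rw [Fintype.card_sigma, ← Finset.univ_sigma_univ, Finset.sum_sigma]
    calc ∑ i : Fin len, ∑ _c : Fin (Lst.get i), Fintype.card (Pow m (i : ℕ))
        = ∑ i : Fin len, Lst.get i * bN ^ (i : ℕ) := by
          refine Finset.sum_congr rfl (fun i _ => ?_)
          rw [Finset.sum_const, Finset.card_univ, Fintype.card_fin, smul_eq_mul,
            pow_card, ← hbN]
      _ = Nat.ofDigits bN Lst := (ofDigits_eq_sum bN Lst).symm
      _ = n := by rw [hLst]; exact Nat.ofDigits_digits bN n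
  · -- the bound
    intro S hS
    have h1 : S.card ≤ ∑ p : (Σ i : Fin len, Fin (Lst.get i)), rN ^ ((p.1 : Fin len) : ℕ) := by
      refine sigma_bound (B := fun p => rN ^ ((p.1 : Fin len) : ℕ))
        (fun p T hT => ?_) S hS
      have := pow_bound m d (by omega) ((p.1 : Fin len) : ℕ) T hT
      rwa [← hrN] at this
    have h2 : ∑ p : (Σ i : Fin len, Fin (Lst.get i)), rN ^ ((p.1 : Fin len) : ℕ)
        ≤ bN * rN ^ len := by
      rw [← Finset.univ_sigma_univ, Finset.sum_sigma]
      calc ∑ i : Fin len, ∑ _c : Fin (Lst.get i), rN ^ (i : ℕ)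
          = ∑ i : Fin len, Lst.get i * rN ^ (i : ℕ) := by
            refine Finset.sum_congr rfl (fun i _ => ?_)
            rw [Finset.sum_const, Finset.card_univ, Fintype.card_fin, smul_eq_mul]
        _ ≤ ∑ i : Fin len, bN * rN ^ (i : ℕ) := by
            refine Finset.sum_le_sum (fun i _ => ?_)
            have hmem : Lst.get i ∈ Lst := List.get_mem Lst i
            have hmem2 : Lst.get i ∈ Nat.digits bN n := hLst ▸ hmem
            exact Nat.mul_le_mul_right _ (le_of_lt (Nat.digits_lt_base hb1 hmem2))
        _ = bN * ∑ i : Fin len, rN ^ (i : ℕ) := by rw [Finset.mul_sum]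
        _ ≤ bN * rN ^ len := by
            refine Nat.mul_le_mul_left _ ?_
            rw [Fin.sum_univ_eq_sum_range]
            exact geo_le rN hr2 len
    have hcast : (S.card : ℝ) ≤ (bN : ℝ) * (rN : ℝ) ^ (len : ℕ) := by
      exact_mod_cast h1.trans h2
    have hb0R : (0:ℝ) < (bN : ℝ) := by
      have : (0:ℕ) < bN := by omega
      exact_mod_cast this
    have hr0R : (0:ℝ) < (rN : ℝ) := by
      have : (0:ℕ) < rN := by omega
      exact_mod_cast this
    have hbcast : ((bN : ℕ) : ℝ) = 2 * (m : ℝ) := by rw [hbN]; push_cast; ring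
    have hrcast : ((rN : ℕ) : ℝ) = (m : ℝ) + d := by rw [hrN]; push_cast; ring
    have hbc : (bN : ℝ) ^ c = (rN : ℝ) := by
      rw [hc, hbcast, hrcast]
      exact Real.rpow_logb (by linarith) (by linarith) (by linarith)
    have hc0 : 0 ≤ c := by
      rw [hc]
      exact Real.logb_nonneg (by linarith) (by linarith)
    have hkey : (rN : ℝ) ^ (len : ℕ) ≤ ((bN : ℝ) * n) ^ c := by
      have e1 : (rN : ℝ) ^ (len : ℕ) = ((bN : ℝ) ^ (len : ℕ)) ^ c := by
        rw [← hbc, ← Real.rpow_natCast ((bN:ℝ) ^ c) len, ← Real.rpow_natCast (bN:ℝ) len,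
          ← Real.rpow_mul (le_of_lt hb0R), ← Real.rpow_mul (le_of_lt hb0R), mul_comm]
      rw [e1]
      refine Real.rpow_le_rpow (by positivity) ?_ hc0
      have hnat : bN ^ len ≤ bN * n := by
        rw [hlen, hLst]
        exact Nat.base_pow_length_digits_le bN n hb1 hn0
      exact_mod_cast hnat
    have hSc : (S.card : ℝ) ≤ (bN:ℝ) * ((rN:ℝ) * (n:ℝ) ^ c) := by
      calc (S.card:ℝ) ≤ (bN:ℝ) * (rN:ℝ) ^ (len : ℕ) := hcast
        _ ≤ (bN:ℝ) * (((bN:ℝ) * n) ^ c) := by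
            exact mul_le_mul_of_nonneg_left hkey (le_of_lt hb0R)
        _ = (bN:ℝ) * ((bN:ℝ) ^ c * (n:ℝ) ^ c) := by
            rw [Real.mul_rpow (le_of_lt hb0R) (Nat.cast_nonneg n)]
        _ = (bN:ℝ) * ((rN:ℝ) * (n:ℝ) ^ c) := by rw [hbc]
    have hle : ((bN * rN : ℕ):ℝ) ^ (1/ε) ≤ (n:ℝ) := by
      refine le_trans (Nat.le_ceil _) ?_
      exact_mod_cast le_trans (le_max_right _ _) hn
    have hpow : ((bN * rN : ℕ):ℝ) ≤ (n:ℝ) ^ ε := by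
      calc ((bN * rN : ℕ):ℝ) = (((bN * rN : ℕ):ℝ) ^ (1/ε)) ^ ε := by
            rw [← Real.rpow_mul (Nat.cast_nonneg _), one_div_mul_cancel (ne_of_gt hε),
              Real.rpow_one]
        _ ≤ (n:ℝ) ^ ε := Real.rpow_le_rpow (Real.rpow_nonneg (Nat.cast_nonneg _) _)
            hle (le_of_lt hε)
    have hn0R : (0:ℝ) < (n:ℝ) := by
      have : (0:ℕ) < n := by omega
      exact_mod_cast this
    calc (S.card : ℝ) ≤ (bN:ℝ) * ((rN:ℝ) * (n:ℝ) ^ c) := hSc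
      _ = ((bN * rN : ℕ):ℝ) * (n:ℝ) ^ c := by push_cast; ring
      _ ≤ (n:ℝ) ^ ε * (n:ℝ) ^ c := by
          exact mul_le_mul_of_nonneg_right hpow (Real.rpow_nonneg (le_of_lt hn0R) _)
      _ = (n:ℝ) ^ (c + ε) := by rw [← Real.rpow_add hn0R, add_comm]

end ExStar

/-- For every `d ≥ 2`, `m ≥ 2` and `ε > 0`, for all sufficiently large `n` there is an
`n`-element poset whose largest induced subposet of dimension at most `d` has size at
most `n ^ (log_{2m}(m+d) + ε)`. -/
theorem exStar_Dd_upper (d m : ℕ) (hd : 2 ≤ d) (hm : 2 ≤ m) (ε : ℝ) (hε : 0 < ε) :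
    ∃ N : ℕ, ∀ n : ℕ, N ≤ n →
      ∃ (P : Type) (_ : PartialOrder P) (_ : Fintype P), Fintype.card P = n ∧
        ∀ S : Finset P, dimLE {x // x ∈ S} d →
          (S.card : ℝ) ≤ (n : ℝ) ^ (Real.logb (2 * m) (m + d) + ε) :=
  ExStar.exStar_Dd_upper' d m hd hm ε hε
end

section
/- The function m ↦ log_{2m}(m+2) over positive integers attains its minimum at m = 10, with value log_20 12 ≈ 0.82948 < 0.8295. -/
lemma key_aux (p q : ℕ) (x y : ℝ) (hp : 0 < p) (hq : 0 < q) (hx : 1 ≤ x) (hy : 0 < y)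
    (h1 : (12:ℝ)^q ≤ 20^p) (h2 : x^p ≤ y^q) :
    Real.log 12 * Real.log x ≤ Real.log 20 * Real.log y := by
  have l1 : (q:ℝ) * Real.log 12 ≤ (p:ℝ) * Real.log 20 := by
    have := Real.log_le_log (by positivity) h1
    rwa [Real.log_pow, Real.log_pow] at this
  have l2 : (p:ℝ) * Real.log x ≤ (q:ℝ) * Real.log y := by
    have := Real.log_le_log (by positivity) h2
    rwa [Real.log_pow, Real.log_pow] at this
  have hlx : 0 ≤ Real.log x := Real.log_nonneg hx
  have hl12 : 0 ≤ Real.log 12 := Real.log_nonneg (by norm_num)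
  have hp' : (0:ℝ) < p := by exact_mod_cast hp
  have hq' : (0:ℝ) < q := by exact_mod_cast hq
  have hmul : ((q:ℝ) * Real.log 12) * ((p:ℝ) * Real.log x)
      ≤ ((p:ℝ) * Real.log 20) * ((q:ℝ) * Real.log y) :=
    mul_le_mul l1 l2 (by positivity) (le_trans (by positivity) l1)
  have h3 : ((p:ℝ) * q) * (Real.log 12 * Real.log x)
      ≤ ((p:ℝ) * q) * (Real.log 20 * Real.log y) := by nlinarith [hmul]
  exact le_of_mul_le_mul_left h3 (by positivity)

/-- The function `m ↦ log_{2m}(m+2)` on positive integers attains its minimum at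
`m = 10`, with value `log_20 12 < 0.8295`. -/
theorem logb_min_at_ten :
    (∀ m : ℕ, 0 < m → Real.logb 20 12 ≤ Real.logb (2 * (m : ℝ)) ((m : ℝ) + 2)) ∧
    Real.logb 20 12 < 0.8295 := by
  constructor
  · intro m hm
    have hm1 : (1:ℝ) ≤ (m:ℝ) := by exact_mod_cast hm
    have hlb : (0:ℝ) < Real.log (2 * (m:ℝ)) :=
      Real.log_pos (by linarith)
    have hl20 : (0:ℝ) < Real.log 20 := Real.log_pos (by norm_num)
    rw [Real.logb, Real.logb, div_le_div_iff₀ hl20 hlb]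
    -- goal : Real.log 12 * Real.log (2*m) ≤ Real.log (m+2) * Real.log 20
    rw [mul_comm (Real.log ((m:ℝ)+2)) (Real.log 20)] at *
    have hx1 : (1:ℝ) ≤ 2 * (m:ℝ) := by linarith
    have hy0 : (0:ℝ) < (m:ℝ) + 2 := by linarith
    rcases le_or_gt m 15 with h15 | h16
    · interval_cases m
      · exact key_aux 1 1 _ _ one_pos one_pos hx1 hy0 (by norm_num) (by norm_num)
      · exact key_aux 1 1 _ _ one_pos one_pos hx1 hy0 (by norm_num) (by norm_num)
      · exact key_aux 5 6 _ _ (by norm_num) (by norm_num) hx1 hy0 (by norm_num) (by norm_num)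
      · exact key_aux 5 6 _ _ (by norm_num) (by norm_num) hx1 hy0 (by norm_num) (by norm_num)
      · exact key_aux 5 6 _ _ (by norm_num) (by norm_num) hx1 hy0 (by norm_num) (by norm_num)
      · exact key_aux 5 6 _ _ (by norm_num) (by norm_num) hx1 hy0 (by norm_num) (by norm_num)
      · exact key_aux 39 47 _ _ (by norm_num) (by norm_num) hx1 hy0 (by norm_num) (by norm_num)
      · exact key_aux 39 47 _ _ (by norm_num) (by norm_num) hx1 hy0 (by norm_num) (by norm_num)
      · exact key_aux 73 88 _ _ (by norm_num) (by norm_num) hx1 hy0 (by norm_num) (by norm_num)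
      · norm_num [mul_comm]
      · exact key_aux 39 47 _ _ (by norm_num) (by norm_num) hx1 hy0 (by norm_num) (by norm_num)
      · exact key_aux 39 47 _ _ (by norm_num) (by norm_num) hx1 hy0 (by norm_num) (by norm_num)
      · exact key_aux 39 47 _ _ (by norm_num) (by norm_num) hx1 hy0 (by norm_num) (by norm_num)
      · exact key_aux 39 47 _ _ (by norm_num) (by norm_num) hx1 hy0 (by norm_num) (by norm_num)
      · exact key_aux 39 47 _ _ (by norm_num) (by norm_num) hx1 hy0 (by norm_num) (by norm_num)
    · have hm16 : (16:ℝ) ≤ (m:ℝ) := by exact_mod_cast h16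
      refine key_aux 5 6 _ _ (by norm_num) (by norm_num) hx1 hy0 (by norm_num) ?_
      have hq : (0:ℝ) ≤ ((m:ℝ) - 16) * ((m:ℝ)^2 - 4*(m:ℝ) - 4) := by
        apply mul_nonneg <;> nlinarith
      nlinarith [hq, sq_nonneg ((m:ℝ)), pow_pos (by linarith : (0:ℝ) < (m:ℝ)) 5,
        pow_pos (by linarith : (0:ℝ) < (m:ℝ)) 4, pow_pos (by linarith : (0:ℝ) < (m:ℝ)) 3]
  · have hl20 : (0:ℝ) < Real.log 20 := Real.log_pos (by norm_num)
    rw [Real.logb, div_lt_iff₀ hl20]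
    have h : (2000:ℝ) * Real.log 12 < 1659 * Real.log 20 := by
      have := Real.log_lt_log (by positivity : (0:ℝ) < 12^2000)
        (by exact_mod_cast (by decide +kernel : (12:ℕ)^2000 < 20^1659) : (12:ℝ)^2000 < 20^1659)
      rwa [Real.log_pow, Real.log_pow] at this

    linarith
end

section
/- The maximum size of an induced subposet of the Boolean lattice B_3 with order dimension at most 2 is 7. -/
def S7 : Finset (Finset (Fin 3)) := Finset.univ.erase {0}

def r1 : Finset (Fin 3) → ℕ := fun s =>
  if s = ∅ then 0 else if s = {1} then 1 else if s = {0,1} then 2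
  else if s = {2} then 3 else if s = {1,2} then 4 else if s = {0,2} then 5 else 6

def r2 : Finset (Fin 3) → ℕ := fun s =>
  if s = ∅ then 0 else if s = {2} then 1 else if s = {0,2} then 2
  else if s = {1} then 3 else if s = {1,2} then 4 else if s = {0,1} then 5 else 6

def f1 : {x // x ∈ S7} → ℕ := fun x => r1 x.val
def f2 : {x // x ∈ S7} → ℕ := fun x => r2 x.val

lemma hf1 : Function.Injective f1 := by decide
lemma hf2 : Function.Injective f2 := by decide

lemma ext1 : ∀ x y : {x // x ∈ S7}, x ≤ y → f1 x ≤ f1 y := by decide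
lemma ext2 : ∀ x y : {x // x ∈ S7}, x ≤ y → f2 x ≤ f2 y := by decide
lemma inter12 : ∀ x y : {x // x ∈ S7}, f1 x ≤ f1 y → f2 x ≤ f2 y → x ≤ y := by decide

lemma part1 : ∃ S : Finset (Finset (Fin 3)), dimLE {x // x ∈ S} 2 ∧ S.card = 7 := by
  refine ⟨S7, ⟨![LinearOrder.lift' f1 hf1, LinearOrder.lift' f2 hf2], ?_, ?_⟩, by decide⟩
  · intro i x y h
    fin_cases i
    · exact ext1 x y h
    · exact ext2 x y h
  · intro x y h
    exact inter12 x y (h 0) (h 1)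

lemma part2 : ∀ S : Finset (Finset (Fin 3)), dimLE {x // x ∈ S} 2 → S.card ≤ 7 := by
  intro S hdim
  by_contra h
  push_neg at h
  have hS : S = Finset.univ := by
    apply Finset.eq_univ_of_card
    have h8 : Fintype.card (Finset (Fin 3)) = 8 := by decide
    have := Finset.card_le_univ S
    omega
  subst hS
  obtain ⟨L, hext, hint⟩ := hdim
  -- atoms and coatoms of B_3, forming the "standard example" S_3
  set a : Fin 3 → {x // x ∈ (Finset.univ : Finset (Finset (Fin 3)))} :=
    fun i => ⟨{i}, Finset.mem_univ _⟩ with ha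
  set b : Fin 3 → {x // x ∈ (Finset.univ : Finset (Finset (Fin 3)))} :=
    fun i => ⟨{i}ᶜ, Finset.mem_univ _⟩ with hb
  have hab : ∀ i j : Fin 3, i ≠ j → a i ≤ b j := by
    intro i j hij
    show ({i} : Finset (Fin 3)) ≤ {j}ᶜ
    intro x hx
    simp only [Finset.mem_singleton] at hx
    simp [Finset.mem_compl, hx, hij]
  have hnab : ∀ i : Fin 3, ¬ a i ≤ b i := by
    intro i hle
    have : (i : Fin 3) ∈ ({i}ᶜ : Finset (Fin 3)) := hle (Finset.mem_singleton_self i)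
    simp at this
  -- each incomparable pair (a i, b i) must be reversed in one of the two orders
  have hch : ∀ i : Fin 3, ∃ k : Fin 2, ¬ (L k).le (a i) (b i) := by
    intro i
    by_contra hc
    push_neg at hc
    exact hnab i (hint _ _ hc)
  choose g hg using hch
  -- pigeonhole: two pairs reversed in the same order
  obtain ⟨i, j, hij, hgij⟩ := Fintype.exists_ne_map_eq_of_card_lt g (by decide)
  set k := g i with hk
  have hba_i : (L k).le (b i) (a i) := ((L k).le_total (a i) (b i)).resolve_left (hg i)
  have hba_j : (L k).le (b j) (a j) := by
    rw [hgij] at hk ⊢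
    exact ((L (g j)).le_total (a j) (b j)).resolve_left (hg j)
  have h1 : (L k).le (a i) (b j) := hext k _ _ (hab i j hij)
  have h2 : (L k).le (a j) (b i) := hext k _ _ (hab j i (Ne.symm hij))
  have hchain : (L k).le (a i) (b i) :=
    (L k).toPartialOrder.toPreorder.le_trans _ _ _ h1
      ((L k).toPartialOrder.toPreorder.le_trans _ _ _ hba_j h2)
  exact hg i hchain

/-- The maximum size of an induced subposet of the Boolean lattice `B_3` of order
dimension at most 2 is 7. -/
theorem boolean_three_dim2 :
    IsGreatest {n | ∃ S : Finset (Finset (Fin 3)), dimLE {x // x ∈ S} 2 ∧ S.card = n} 7 := by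
  constructor
  · exact part1
  · rintro n ⟨S, hd, rfl⟩
    exact part2 S hd
end

section
/- For any finite poset P and family F of posets closed under isomorphism, if S is an F-free induced subposet of P^k, then writing S_α for the elements of S with initial segment α (an i-tuple), |S_α| ≤ (ex*(P,F))^{k-i}. -/
lemma lex_lt_iff_at {P : Type*} [PartialOrder P] {k : ℕ} (s t : LexPow P k) (m : Fin k)
    (hag : ∀ l : Fin k, l < m → ofLex s l = ofLex t l) (hne : ofLex s m ≠ ofLex t m) :
    s < t ↔ ofLex s m < ofLex t m := by
  constructor
  · rintro ⟨j, hj, hlt⟩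
    rcases lt_trichotomy j m with h | rfl | h
    · exact absurd (hag j h) (ne_of_lt hlt)
    · exact hlt
    · exact absurd (hj m h) hne
  · intro h
    exact ⟨m, hag, h⟩

open scoped Classical in
lemma key_bound {P : Type*} [PartialOrder P] [Fintype P] {ι : Type*}
    (F : ι → Type*) [∀ i, PartialOrder (F i)] {k : ℕ} (S : Finset (LexPow P k))
    (hS : ∀ i, ¬ Nonempty (F i ↪o {x // x ∈ S})) :
    ∀ (d m : ℕ) (h : m ≤ k), k - m = d → ∀ β : Fin m → P,
    (S.filter (fun s : LexPow P k => ∀ j : Fin m, ofLex s (Fin.castLE h j) = β j)).card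
      ≤ (exStar P F) ^ d := by
  classical
  intro d
  induction d with
  | zero =>
    intro m h hd β
    have hm : m = k := by omega
    subst hm
    simp only [pow_zero]
    apply Finset.card_le_one.mpr
    intro a ha b hb
    simp only [Finset.mem_filter] at ha hb
    refine ofLex.injective (funext fun j => ?_)
    have h1 := ha.2 j
    have h2 := hb.2 j
    have hcast : Fin.castLE h j = j := Fin.ext rfl
    rw [hcast] at h1 h2
    exact h1.trans h2.symm
  | succ d ih =>
    intro m h hd β
    have hmk : m < k := by omega
    have hm1 : m + 1 ≤ k := hmk
    set e := exStar P F with he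
    set T : Finset (LexPow P k) :=
      S.filter (fun s : LexPow P k => ∀ j : Fin m, ofLex s (Fin.castLE h j) = β j) with hT
    set Tp : P → Finset (LexPow P k) := fun p =>
      S.filter (fun s : LexPow P k => ∀ j : Fin (m+1), ofLex s (Fin.castLE hm1 j) = (Fin.snoc β p : Fin (m+1) → P) j) with hTp
    have hfiber : ∀ p : P, T.filter (fun s : LexPow P k => ofLex s ⟨m, hmk⟩ = p) = Tp p := by
      intro p
      ext s
      simp only [hT, hTp, Finset.mem_filter, and_assoc]
      constructor
      · rintro ⟨hsS, hβ, hp⟩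
        refine ⟨hsS, fun j => ?_⟩
        refine Fin.lastCases ?_ (fun j₀ => ?_) j
        · have : Fin.castLE hm1 (Fin.last m) = (⟨m, hmk⟩ : Fin k) := Fin.ext rfl
          rw [this, Fin.snoc_last]; exact hp
        · have : Fin.castLE hm1 (Fin.castSucc j₀) = Fin.castLE h j₀ := Fin.ext rfl
          rw [this, Fin.snoc_castSucc]; exact hβ j₀
      · rintro ⟨hsS, hβ⟩
        refine ⟨hsS, fun j₀ => ?_, ?_⟩
        · have h1 := hβ (Fin.castSucc j₀)
          have : Fin.castLE hm1 (Fin.castSucc j₀) = Fin.castLE h j₀ := Fin.ext rfl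
          rwa [this, Fin.snoc_castSucc] at h1
        · have h1 := hβ (Fin.last m)
          have : Fin.castLE hm1 (Fin.last m) = (⟨m, hmk⟩ : Fin k) := Fin.ext rfl
          rwa [this, Fin.snoc_last] at h1
    have hcard : T.card = ∑ p : P, (Tp p).card := by
      rw [Finset.card_eq_sum_card_fiberwise (f := fun s : LexPow P k => ofLex s ⟨m, hmk⟩)
        (t := Finset.univ) (fun x _ => Finset.mem_univ _)]
      exact Finset.sum_congr rfl fun p _ => by rw [hfiber p]
    set Q : Finset P := Finset.univ.filter (fun p => (Tp p).Nonempty) with hQ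
    have hsum : ∑ p : P, (Tp p).card = ∑ p ∈ Q, (Tp p).card := by
      rw [hQ]
      refine (Finset.sum_filter_of_ne ?_).symm
      intro p _ hne
      exact Finset.card_ne_zero.mp hne
    -- choose representatives
    have hrep : ∀ p : {x // x ∈ Q}, ∃ s, s ∈ Tp p.1 := by
      intro p
      exact (Finset.mem_filter.mp p.2).2
    choose rep hrepmem using hrep
    have hrepS : ∀ p, rep p ∈ S := fun p => (Finset.mem_filter.mp (hrepmem p)).1
    have hrepco : ∀ p, ∀ j : Fin (m+1),
        ofLex (rep p) (Fin.castLE hm1 j) = (Fin.snoc β (p : P) : Fin (m+1) → P) j :=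
      fun p => (Finset.mem_filter.mp (hrepmem p)).2
    have hrepm : ∀ p, ofLex (rep p) ⟨m, hmk⟩ = (p : P) := by
      intro p
      have h1 := hrepco p (Fin.last m)
      have : Fin.castLE hm1 (Fin.last m) = (⟨m, hmk⟩ : Fin k) := Fin.ext rfl
      rwa [this, Fin.snoc_last] at h1
    have hreplt : ∀ p q, ∀ l : Fin k, l < ⟨m, hmk⟩ → ofLex (rep p) l = ofLex (rep q) l := by
      intro p q l hl
      have hlm : (l : ℕ) < m := hl
      have hle : Fin.castLE hm1 (Fin.castSucc ⟨l, hlm⟩) = l := Fin.ext rfl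
      have h1 := hrepco p (Fin.castSucc ⟨l, hlm⟩)
      have h2 := hrepco q (Fin.castSucc ⟨l, hlm⟩)
      rw [hle, Fin.snoc_castSucc] at h1 h2
      rw [h1, h2]
    have hkey : ∀ p q : {x // x ∈ Q}, rep p ≤ rep q ↔ (p : P) ≤ q := by
      intro p q
      rcases eq_or_ne (p : P) q with hpq | hpq
      · have : p = q := Subtype.ext hpq
        subst this
        simp
      · have hne : ofLex (rep p) ⟨m, hmk⟩ ≠ ofLex (rep q) ⟨m, hmk⟩ := by
          rw [hrepm, hrepm]; exact hpq
        have hrne : rep p ≠ rep q := fun hh => hne (by rw [hh])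
        have hlt := lex_lt_iff_at (rep p) (rep q) ⟨m, hmk⟩ (hreplt p q) hne
        rw [hrepm, hrepm] at hlt
        rw [le_iff_lt_or_eq, le_iff_lt_or_eq]
        exact or_congr hlt (iff_of_false hrne (fun hh => hpq hh))
    have emb : {x // x ∈ Q} ↪o {x // x ∈ S} :=
      OrderEmbedding.ofMapLEIff (fun p => ⟨rep p, hrepS p⟩)
        (fun a b => by rw [Subtype.mk_le_mk]; exact (hkey a b).trans Subtype.coe_le_coe)
    have hQfree : ∀ i, ¬ Nonempty (F i ↪o {x // x ∈ Q}) := by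
      intro i ⟨f⟩
      exact hS i ⟨f.trans emb⟩
    have hQcard : Q.card ≤ e := by
      have hmem : Q.card ∈ {n | ∃ S' : Finset P,
          (∀ i, ¬ Nonempty (F i ↪o {x // x ∈ S'})) ∧ S'.card = n} := ⟨Q, hQfree, rfl⟩
      have hbdd : BddAbove {n | ∃ S' : Finset P,
          (∀ i, ¬ Nonempty (F i ↪o {x // x ∈ S'})) ∧ S'.card = n} := by
        refine ⟨Fintype.card P, ?_⟩
        rintro n ⟨S', -, rfl⟩
        exact Finset.card_le_univ S' |>.trans (le_of_eq (Finset.card_univ))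
      exact le_csSup hbdd hmem
    calc T.card = ∑ p ∈ Q, (Tp p).card := by rw [hcard, hsum]
      _ ≤ ∑ _p ∈ Q, e ^ d := by
          refine Finset.sum_le_sum ?_
          intro p _
          exact ih (m + 1) hm1 (by omega) (Fin.snoc β p)
      _ = Q.card * e ^ d := by rw [Finset.sum_const, smul_eq_mul]
      _ ≤ e * e ^ d := Nat.mul_le_mul_right _ hQcard
      _ = e ^ (d + 1) := by rw [pow_succ, mul_comm]

/-- The inductive inequality in the proof of Theorem 2.1: if `S ⊆ P^k` is `F`-free and
`α` is an `i`-tuple, then the set `S_α` of elements of `S` with initial segment `α` has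
size at most `(ex*(P,F))^(k-i)`. -/
theorem S_alpha_bound (P : Type*) [PartialOrder P] [Fintype P] {ι : Type*}
    (F : ι → Type*) [∀ i, PartialOrder (F i)] (k : ℕ) (S : Finset (LexPow P k))
    (hS : ∀ i, ¬ Nonempty (F i ↪o {x // x ∈ S}))
    (i : ℕ) (hik : i ≤ k) (α : Fin i → P) :
    Set.ncard {s : LexPow P k | s ∈ S ∧ ∀ j : Fin i, ofLex s (Fin.castLE hik j) = α j}
      ≤ (exStar P F) ^ (k - i) := by
  classical
  have hset : {s : LexPow P k | s ∈ S ∧ ∀ j : Fin i, ofLex s (Fin.castLE hik j) = α j}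
      = ↑(S.filter (fun s : LexPow P k => ∀ j : Fin i, ofLex s (Fin.castLE hik j) = α j)) := by
    ext s
    rw [Set.mem_setOf_eq, Finset.mem_coe, Finset.mem_filter]
  rw [hset, Set.ncard_coe_finset]
  exact key_bound F S hS (k - i) i hik rfl α
end
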